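/- arXiv:1606.00996 — 4 statements merged into one kernel-verified Lean document; each statement's English description precedes it below -/
import Mathlib

section
/- With A, B finite nonempty sets, |A ∩ B| = n, |A ∪ B| = u, and i.i.d. Uniform(0,1) hash values h on A ∪ B, letting x_A, x_B be the maxima over A and B, one has E[x_A · x_B · 1_{x_A = x_B}] = n/(u+2). -/
open MeasureTheory ProbabilityTheory

lemma aux_meas_update {κ : Type*} [DecidableEq κ] (e : κ) :
    Measurable (fun p : ℝ × (κ → ℝ) => Function.update p.2 e p.1) := by
  refine measurable_pi_lambda _ fun f => ?_
  rcases eq_or_ne f e with rfl | hf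
  · simpa [Function.update_self] using measurable_fst
  · have : (fun p : ℝ × (κ → ℝ) => Function.update p.2 e p.1 f)
        = fun p => p.2 f := funext fun p => Function.update_of_ne hf _ _
    rw [this]; exact (measurable_pi_apply f).comp measurable_snd

lemma aux_map_update {κ : Type*} [Fintype κ] [DecidableEq κ] (μ0 : Measure ℝ)
    [IsProbabilityMeasure μ0] (e : κ) :
    Measure.map (fun p : ℝ × (κ → ℝ) => Function.update p.2 e p.1)
      (μ0.prod (Measure.pi fun _ : κ => μ0)) = Measure.pi fun _ : κ => μ0 := by
  refine (Measure.pi_eq (μ := fun _ : κ => μ0) fun s hs => ?_).symm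
  rw [Measure.map_apply (aux_meas_update e) (MeasurableSet.univ_pi hs)]
  have hpre : (fun p : ℝ × (κ → ℝ) => Function.update p.2 e p.1) ⁻¹' (Set.univ.pi s)
      = s e ×ˢ Set.univ.pi (fun f => if f = e then Set.univ else s f) := by
    ext p
    simp only [Set.mem_preimage, Set.mem_pi, Set.mem_univ, forall_true_left,
      Set.mem_prod, Function.update_apply]
    constructor
    · intro H
      refine ⟨by simpa using H e, fun f => ?_⟩
      rcases eq_or_ne f e with rfl | hf
      · simp
      · simpa [hf] using H f
    · rintro ⟨h1, h2⟩ f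
      rcases eq_or_ne f e with rfl | hf
      · simpa using h1
      · have := h2 f; simpa [hf] using this
  rw [hpre, Measure.prod_prod, Measure.pi_pi]
  have h1 : ∏ f : κ, μ0 (if f = e then Set.univ else s f)
      = ∏ f ∈ Finset.univ.erase e, μ0 (s f) := by
    rw [← Finset.prod_erase_mul _ _ (Finset.mem_univ e)]
    rw [if_pos rfl, measure_univ, mul_one]
    refine Finset.prod_congr rfl fun f hf => ?_
    rw [if_neg (Finset.ne_of_mem_erase hf)]
  rw [h1, ← Finset.prod_erase_mul _ _ (Finset.mem_univ e), mul_comm]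

lemma aux_ties {κ : Type*} [Fintype κ] [DecidableEq κ] (μ0 : Measure ℝ)
    [IsProbabilityMeasure μ0] [NullSingletonClass μ0] {f g : κ} (hfg : f ≠ g) :
    Measure.pi (fun _ : κ => μ0) {v : κ → ℝ | v f = v g} = 0 := by
  have hset : MeasurableSet {v : κ → ℝ | v f = v g} :=
    measurableSet_eq_fun (measurable_pi_apply f) (measurable_pi_apply g)
  rw [← aux_map_update μ0 f, Measure.map_apply (aux_meas_update f) hset]
  have hpre : (fun p : ℝ × (κ → ℝ) => Function.update p.2 f p.1) ⁻¹' {v : κ → ℝ | v f = v g}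
      = {p : ℝ × (κ → ℝ) | p.1 = p.2 g} := by
    ext p
    simp [Function.update_self, Function.update_of_ne (Ne.symm hfg)]
  rw [hpre]
  have hms : MeasurableSet {p : ℝ × (κ → ℝ) | p.1 = p.2 g} :=
    measurableSet_eq_fun measurable_fst ((measurable_pi_apply g).comp measurable_snd)
  rw [Measure.prod_apply hms]
  have : ∀ x : ℝ, (Measure.pi fun _ : κ => μ0) {a : κ → ℝ | x = a g} = 0 := by
    intro x
    have hx : {a : κ → ℝ | x = a g}
        = Set.univ.pi (fun f' => if f' = g then {x} else Set.univ) := by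
      ext v
      simp only [Set.mem_setOf_eq, Set.mem_pi, Set.mem_univ, forall_true_left]
      constructor
      · intro H f'
        rcases eq_or_ne f' g with rfl | hf'
        · simp [← H]
        · simp [hf']
      · intro H
        have := H g; simp at this; simp [this]
    rw [hx, Measure.pi_pi]
    refine Finset.prod_eq_zero (Finset.mem_univ g) ?_
    simp
  calc ∫⁻ x, (Measure.pi fun _ : κ => μ0) (Prod.mk x ⁻¹' {p : ℝ × (κ → ℝ) | p.1 = p.2 g}) ∂μ0
      = ∫⁻ _, (0 : ENNReal) ∂μ0 := lintegral_congr fun x => this x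
    _ = 0 := lintegral_zero

lemma aux_single {κ : Type*} [Fintype κ] [DecidableEq κ] (e : κ) :
    ∫⁻ v, Set.indicator {w : κ → ℝ | ∀ f, f ≠ e → w f < w e}
      (fun v => ENNReal.ofReal ((v e)^2)) v
      ∂(Measure.pi fun _ : κ => volume.restrict (Set.Ioo 0 1))
    = ENNReal.ofReal (1/(Fintype.card κ + 2)) := by
  set μ0 : Measure ℝ := volume.restrict (Set.Ioo 0 1) with hμ0
  haveI : IsProbabilityMeasure μ0 := ⟨by simp [hμ0, Real.volume_Ioo]⟩
  set S : Set (κ → ℝ) := {w : κ → ℝ | ∀ f, f ≠ e → w f < w e} with hS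
  have hSm : MeasurableSet S := by
    have : S = ⋂ f, ⋂ (_ : f ≠ e), {w : κ → ℝ | w f < w e} := by
      ext w; simp [hS]
    rw [this]
    exact MeasurableSet.iInter fun f => MeasurableSet.iInter fun _ =>
      measurableSet_lt (measurable_pi_apply f) (measurable_pi_apply e)
  have hFm : Measurable (Set.indicator S (fun v : κ → ℝ => ENNReal.ofReal ((v e)^2))) :=
    Measurable.indicator (ENNReal.measurable_ofReal.comp ((measurable_pi_apply e).pow_const 2)) hSm
  rw [← aux_map_update μ0 e, lintegral_map hFm (aux_meas_update e)]
  have hcomp : (fun p : ℝ × (κ → ℝ) =>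
      Set.indicator S (fun v : κ → ℝ => ENNReal.ofReal ((v e)^2)) (Function.update p.2 e p.1))
      = fun p : ℝ × (κ → ℝ) =>
        Set.indicator {v : κ → ℝ | ∀ f, f ≠ e → v f < p.1} (fun _ => ENNReal.ofReal (p.1^2)) p.2 := by
    funext p
    have hiff : Function.update p.2 e p.1 ∈ S ↔ ∀ f, f ≠ e → p.2 f < p.1 := by
      constructor
      · intro H f hf
        have := H f hf
        rwa [Function.update_of_ne hf, Function.update_self] at this
      · intro H f hf
        rw [Function.update_of_ne hf, Function.update_self]
        exact H f hf
    by_cases hp : ∀ f, f ≠ e → p.2 f < p.1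
    · rw [Set.indicator_of_mem (hiff.mpr hp),
        Set.indicator_of_mem (show p.2 ∈ {v : κ → ℝ | ∀ f, f ≠ e → v f < p.1} from hp),
        Function.update_self]
    · rw [Set.indicator_of_notMem (fun hmem => hp (hiff.mp hmem)),
        Set.indicator_of_notMem (show p.2 ∉ {v : κ → ℝ | ∀ f, f ≠ e → v f < p.1} from hp)]
  rw [hcomp]
  have hmeas2 : Measurable (fun p : ℝ × (κ → ℝ) =>
      Set.indicator {v : κ → ℝ | ∀ f, f ≠ e → v f < p.1} (fun _ => ENNReal.ofReal (p.1^2)) p.2) := by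
    have heq : (fun p : ℝ × (κ → ℝ) =>
        Set.indicator {v : κ → ℝ | ∀ f, f ≠ e → v f < p.1} (fun _ => ENNReal.ofReal (p.1^2)) p.2)
        = Set.indicator {p : ℝ × (κ → ℝ) | ∀ f, f ≠ e → p.2 f < p.1}
          (fun p => ENNReal.ofReal (p.1^2)) := by
      funext p
      by_cases hp : ∀ f, f ≠ e → p.2 f < p.1
      · rw [Set.indicator_of_mem (show p.2 ∈ {v : κ → ℝ | ∀ f, f ≠ e → v f < p.1} from hp),
          Set.indicator_of_mem (show p ∈ {p : ℝ × (κ → ℝ) | ∀ f, f ≠ e → p.2 f < p.1} from hp)]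
      · rw [Set.indicator_of_notMem (show p.2 ∉ {v : κ → ℝ | ∀ f, f ≠ e → v f < p.1} from hp),
          Set.indicator_of_notMem (show p ∉ {p : ℝ × (κ → ℝ) | ∀ f, f ≠ e → p.2 f < p.1} from hp)]
    rw [heq]
    refine Measurable.indicator (ENNReal.measurable_ofReal.comp (measurable_fst.pow_const 2)) ?_
    have : {p : ℝ × (κ → ℝ) | ∀ f, f ≠ e → p.2 f < p.1}
        = ⋂ f, ⋂ (_ : f ≠ e), {p : ℝ × (κ → ℝ) | p.2 f < p.1} := by
      ext p; simp
    rw [this]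
    exact MeasurableSet.iInter fun f => MeasurableSet.iInter fun _ =>
      measurableSet_lt measurable_snd.eval measurable_fst
  rw [MeasureTheory.lintegral_prod _ hmeas2.aemeasurable]
  have hinner : ∀ x : ℝ, x ∈ Set.Ioo (0:ℝ) 1 →
      ∫⁻ v, Set.indicator {v : κ → ℝ | ∀ f, f ≠ e → v f < x}
        (fun _ => ENNReal.ofReal (x^2)) v ∂(Measure.pi fun _ : κ => μ0)
      = ENNReal.ofReal (x ^ (Fintype.card κ + 1)) := by
    intro x hx
    have hsetm : MeasurableSet {v : κ → ℝ | ∀ f, f ≠ e → v f < x} := by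
      have : {v : κ → ℝ | ∀ f, f ≠ e → v f < x}
          = ⋂ f, ⋂ (_ : f ≠ e), {v : κ → ℝ | v f < x} := by ext v; simp
      rw [this]
      exact MeasurableSet.iInter fun f => MeasurableSet.iInter fun _ =>
        measurableSet_lt (measurable_pi_apply f) measurable_const
    rw [lintegral_indicator hsetm, setLIntegral_const]
    have hbox : {v : κ → ℝ | ∀ f, f ≠ e → v f < x}
        = Set.univ.pi (fun f => if f = e then Set.univ else Set.Iio x) := by
      ext v
      simp only [Set.mem_setOf_eq, Set.mem_pi, Set.mem_univ, forall_true_left]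
      constructor
      · intro H f
        rcases eq_or_ne f e with rfl | hf
        · simp
        · simpa [hf] using H f hf
      · intro H f hf
        have := H f; rw [if_neg hf] at this; exact this
    have hIio : μ0 (Set.Iio x) = ENNReal.ofReal x := by
      rw [hμ0, Measure.restrict_apply measurableSet_Iio]
      have : Set.Iio x ∩ Set.Ioo 0 1 = Set.Ioo 0 x := by
        ext y
        simp only [Set.mem_inter_iff, Set.mem_Iio, Set.mem_Ioo]
        constructor
        · rintro ⟨h1, h2, h3⟩; exact ⟨h2, h1⟩
        · rintro ⟨h1, h2⟩; exact ⟨h2, h1, h2.trans hx.2⟩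
      rw [this, Real.volume_Ioo, sub_zero]
    rw [hbox, Measure.pi_pi]
    have hprod : ∏ f : κ, μ0 (if f = e then Set.univ else Set.Iio x)
        = ENNReal.ofReal x ^ (Fintype.card κ - 1) := by
      rw [← Finset.prod_erase_mul _ _ (Finset.mem_univ e), if_pos rfl, measure_univ, mul_one]
      rw [Finset.prod_congr rfl (fun f hf => by
        rw [if_neg (Finset.ne_of_mem_erase hf), hIio]), Finset.prod_const,
        Finset.card_erase_of_mem (Finset.mem_univ e), Finset.card_univ]
    rw [hprod]
    have hcard : 1 ≤ Fintype.card κ := Fintype.card_pos_iff.mpr ⟨e⟩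
    rw [← ENNReal.ofReal_pow (le_of_lt hx.1), ← ENNReal.ofReal_mul (by positivity),
      ← pow_add]
    congr 2
    omega
  have hint : IntegrableOn (fun x : ℝ => x ^ (Fintype.card κ + 1)) (Set.Ioo 0 1) volume := by
    have := intervalIntegral.intervalIntegrable_pow (μ := volume) (a := (0:ℝ)) (b := 1)
      (n := Fintype.card κ + 1)
    rw [intervalIntegrable_iff_integrableOn_Ioo_of_le zero_le_one] at this
    exact this
  have hnn : 0 ≤ᵐ[volume.restrict (Set.Ioo (0:ℝ) 1)] fun x : ℝ => x ^ (Fintype.card κ + 1) := by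
    filter_upwards [ae_restrict_mem measurableSet_Ioo] with x hx
    exact pow_nonneg hx.1.le _
  have hval : ∫ x in Set.Ioo (0:ℝ) 1, x ^ (Fintype.card κ + 1) ∂volume
      = 1 / (Fintype.card κ + 2) := by
    rw [← integral_Ioc_eq_integral_Ioo, ← intervalIntegral.integral_of_le zero_le_one,
      integral_pow]
    push_cast
    norm_num
    ring
  calc ∫⁻ x, (∫⁻ v, Set.indicator {v : κ → ℝ | ∀ f, f ≠ e → v f < x}
          (fun _ => ENNReal.ofReal (x^2)) v ∂(Measure.pi fun _ : κ => μ0)) ∂μ0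
      = ∫⁻ x in Set.Ioo (0:ℝ) 1, ENNReal.ofReal (x ^ (Fintype.card κ + 1)) ∂volume := by
        rw [hμ0]
        exact setLIntegral_congr_fun measurableSet_Ioo hinner
    _ = ENNReal.ofReal (∫ x in Set.Ioo (0:ℝ) 1, x ^ (Fintype.card κ + 1) ∂volume) :=
        (ofReal_integral_eq_lintegral_ofReal hint hnn).symm
    _ = ENNReal.ofReal (1 / (Fintype.card κ + 2)) := by rw [hval]

theorem exp_prod_indicator_eq
    {Ω ι : Type*} [MeasureSpace Ω] [IsProbabilityMeasure (ℙ : Measure Ω)]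
    [DecidableEq ι]
    (A B : Finset ι) (hA : A.Nonempty) (hB : B.Nonempty)
    (h : ι → Ω → ℝ)
    (hmeas : ∀ e, Measurable (h e))
    (hindep : iIndepFun
      (fun e : {x // x ∈ A ∪ B} => h e.1) ℙ)
    (hunif : ∀ e ∈ A ∪ B, Measure.map (h e) ℙ = volume.restrict (Set.Ioo (0 : ℝ) 1))
    (xA xB : Ω → ℝ)
    (hxA : ∀ ω, xA ω = A.sup' hA fun e => h e ω)
    (hxB : ∀ ω, xB ω = B.sup' hB fun e => h e ω)
    (hn : (A ∩ B).Nonempty) :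
    ∫ ω, (if xA ω = xB ω then xA ω * xB ω else 0) ∂ℙ
      = ((A ∩ B).card : ℝ) / ((A ∪ B).card + 2) := by
  classical
  set ι' := {x // x ∈ A ∪ B}
  set μ0 : Measure ℝ := volume.restrict (Set.Ioo 0 1) with hμ0
  haveI hprob : IsProbabilityMeasure μ0 := ⟨by simp [hμ0, Real.volume_Ioo]⟩
  haveI hNA : NullSingletonClass μ0 := by rw [hμ0]; infer_instance
  set Φ : Ω → (ι' → ℝ) := fun ω e => h e.1 ω with hΦdef
  have hΦ : Measurable Φ := measurable_pi_lambda _ fun e => hmeas e.1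
  set FA : (ι' → ℝ) → ℝ :=
    fun v => A.sup' hA fun a => if ha : a ∈ A ∪ B then v ⟨a, ha⟩ else 0 with hFAdef
  set FB : (ι' → ℝ) → ℝ :=
    fun v => B.sup' hB fun a => if ha : a ∈ A ∪ B then v ⟨a, ha⟩ else 0 with hFBdef
  have hdm : ∀ a : ι, Measurable (fun v : ι' → ℝ =>
      if ha : a ∈ A ∪ B then v ⟨a, ha⟩ else 0) := by
    intro a
    by_cases ha : a ∈ A ∪ B
    · simp only [dif_pos ha]; exact measurable_pi_apply _
    · simp only [dif_neg ha]; exact measurable_const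
  have hFAm : Measurable FA := by
    have h1 := Finset.measurable_sup' hA fun a (_ : a ∈ A) => hdm a
    have h2 : FA = A.sup' hA fun a (v : ι' → ℝ) =>
        if ha : a ∈ A ∪ B then v ⟨a, ha⟩ else 0 := by
      funext v; rw [Finset.sup'_apply]
    rw [h2]; exact h1
  have hFBm : Measurable FB := by
    have h1 := Finset.measurable_sup' hB fun a (_ : a ∈ B) => hdm a
    have h2 : FB = B.sup' hB fun a (v : ι' → ℝ) =>
        if ha : a ∈ A ∪ B then v ⟨a, ha⟩ else 0 := by
      funext v; rw [Finset.sup'_apply]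
    rw [h2]; exact h1
  set f : (ι' → ℝ) → ℝ := fun v => if FA v = FB v then FA v * FB v else 0 with hfdef
  have hfm : Measurable f :=
    Measurable.ite (measurableSet_eq_fun hFAm hFBm) (hFAm.mul hFBm) measurable_const
  have hfnn : ∀ v, 0 ≤ f v := by
    intro v
    rw [hfdef]
    dsimp only
    split_ifs with hv
    · rw [hv]; exact mul_self_nonneg _
    · exact le_refl 0
  have hcomp : ∀ ω, (if xA ω = xB ω then xA ω * xB ω else 0) = f (Φ ω) := by
    intro ω
    have h1 : FA (Φ ω) = xA ω := by
      rw [hxA]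
      exact Finset.sup'_congr hA rfl fun a haA => by
        rw [dif_pos (Finset.mem_union_left B haA)]
    have h2 : FB (Φ ω) = xB ω := by
      rw [hxB]
      exact Finset.sup'_congr hB rfl fun a haB => by
        rw [dif_pos (Finset.mem_union_right A haB)]
    rw [hfdef]
    dsimp only
    rw [h1, h2]
  have hmap : Measure.map Φ ℙ = Measure.pi fun _ : ι' => μ0 := by
    refine (Measure.pi_eq (μ := fun _ : ι' => μ0) fun t ht => ?_).symm
    rw [Measure.map_apply hΦ (MeasurableSet.univ_pi ht)]
    have hpre : Φ ⁻¹' Set.univ.pi t = ⋂ i ∈ Finset.univ, (fun ω => h (i : ι').1 ω) ⁻¹' t i := by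
      ext ω; simp [hΦdef, Set.mem_pi]
    rw [hpre, hindep.measure_inter_preimage_eq_mul Finset.univ (fun i _ => ht i)]
    refine Finset.prod_congr rfl fun i _ => ?_
    rw [← hunif i.1 i.2, Measure.map_apply (hmeas i.1) (ht i)]
  set T : Finset ι' := Finset.univ.filter (fun e : ι' => e.1 ∈ A ∧ e.1 ∈ B) with hTdef
  set S : ι' → Set (ι' → ℝ) := fun e => {w | ∀ g, g ≠ e → w g < w e} with hSdef
  have hSm : ∀ e : ι', MeasurableSet (S e) := by
    intro e
    have : S e = ⋂ g, ⋂ (_ : g ≠ e), {w : ι' → ℝ | w g < w e} := by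
      ext w; simp [hSdef]
    rw [this]
    exact MeasurableSet.iInter fun g => MeasurableSet.iInter fun _ =>
      measurableSet_lt (measurable_pi_apply g) (measurable_pi_apply e)
  -- pointwise identity off the ties set
  have hpt : ∀ v : ι' → ℝ, (∀ p q : ι', p ≠ q → v p ≠ v q) →
      ENNReal.ofReal (f v)
        = ∑ e ∈ T, Set.indicator (S e) (fun w => ENNReal.ofReal ((w e)^2)) v := by
    intro v hv
    by_cases hex : ∃ e ∈ T, v ∈ S e
    · obtain ⟨e, heT, heS⟩ := hex
      obtain ⟨heA, heB⟩ := (Finset.mem_filter.mp heT).2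
      have hsum : ∑ e' ∈ T, Set.indicator (S e') (fun w => ENNReal.ofReal ((w e')^2)) v
          = ENNReal.ofReal ((v e)^2) := by
        rw [Finset.sum_eq_single_of_mem e heT]
        · exact Set.indicator_of_mem heS _
        · intro e' _ hne
          refine Set.indicator_of_notMem (fun he'S => ?_) _
          exact lt_asymm (heS e' hne) (he'S e hne.symm)
      rw [hsum]
      have hFAv : FA v = v e := by
        apply le_antisymm
        · refine Finset.sup'_le hA _ fun a haA => ?_
          rw [dif_pos (Finset.mem_union_left B haA)]
          rcases eq_or_ne (⟨a, Finset.mem_union_left B haA⟩ : ι') e with hae | hae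
          · rw [hae]
          · exact (heS _ hae).le
        · have := Finset.le_sup' (f := fun a : ι =>
            if ha : a ∈ A ∪ B then v ⟨a, ha⟩ else 0) heA
          rwa [dif_pos e.2] at this
      have hFBv : FB v = v e := by
        apply le_antisymm
        · refine Finset.sup'_le hB _ fun a haB => ?_
          rw [dif_pos (Finset.mem_union_right A haB)]
          rcases eq_or_ne (⟨a, Finset.mem_union_right A haB⟩ : ι') e with hae | hae
          · rw [hae]
          · exact (heS _ hae).le
        · have := Finset.le_sup' (f := fun a : ι =>
            if ha : a ∈ A ∪ B then v ⟨a, ha⟩ else 0) heB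
          rwa [dif_pos e.2] at this
      rw [hfdef]
      dsimp only
      rw [if_pos (by rw [hFAv, hFBv]), hFAv, hFBv, ← pow_two]
    · push_neg at hex
      have hsum0 : ∑ e ∈ T, Set.indicator (S e) (fun w => ENNReal.ofReal ((w e)^2)) v = 0 :=
        Finset.sum_eq_zero fun e heT => Set.indicator_of_notMem (hex e heT) _
      rw [hsum0]
      have hne : FA v ≠ FB v := by
        intro heq
        obtain ⟨a, haA, ha⟩ := Finset.exists_mem_eq_sup' hA
          (fun a : ι => if h' : a ∈ A ∪ B then v ⟨a, h'⟩ else 0)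
        obtain ⟨b, hbB, hb⟩ := Finset.exists_mem_eq_sup' hB
          (fun a : ι => if h' : a ∈ A ∪ B then v ⟨a, h'⟩ else 0)
        set a' : ι' := ⟨a, Finset.mem_union_left B haA⟩ with ha'
        set b' : ι' := ⟨b, Finset.mem_union_right A hbB⟩ with hb'
        have hva : FA v = v a' := by
          have hx : FA v = if h' : a ∈ A ∪ B then v ⟨a, h'⟩ else 0 := ha
          rw [hx, dif_pos (Finset.mem_union_left B haA)]
        have hvb : FB v = v b' := by
          have hx : FB v = if h' : b ∈ A ∪ B then v ⟨b, h'⟩ else 0 := hb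
          rw [hx, dif_pos (Finset.mem_union_right A hbB)]
        have hab : a' = b' := by
          by_contra hneq
          exact hv a' b' hneq (by rw [← hva, ← hvb, heq])
        have hbA : a'.1 ∈ B := by rw [hab]; exact hbB
        have ha'T : a' ∈ T := Finset.mem_filter.mpr ⟨Finset.mem_univ _, haA, hbA⟩
        refine hex a' ha'T ?_
        intro g hg
        have hle : v g ≤ v a' := by
          rcases Finset.mem_union.mp g.2 with hgA | hgB
          · have := Finset.le_sup' (f := fun a : ι =>
              if h' : a ∈ A ∪ B then v ⟨a, h'⟩ else 0) hgA
            rw [dif_pos g.2] at this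
            calc v g ≤ FA v := this
              _ = v a' := hva
          · have := Finset.le_sup' (f := fun a : ι =>
              if h' : a ∈ A ∪ B then v ⟨a, h'⟩ else 0) hgB
            rw [dif_pos g.2] at this
            calc v g ≤ FB v := this
              _ = FA v := heq.symm
              _ = v a' := hva
        exact lt_of_le_of_ne hle (hv g a' hg)
      rw [hfdef]
      dsimp only
      rw [if_neg hne]
      simp
  -- ties have measure zero
  have hnull : (Measure.pi fun _ : ι' => μ0)
      {v : ι' → ℝ | ∃ p : ι' × ι', p.1 ≠ p.2 ∧ v p.1 = v p.2} = 0 := by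
    have hun : {v : ι' → ℝ | ∃ p : ι' × ι', p.1 ≠ p.2 ∧ v p.1 = v p.2}
        = ⋃ p : ι' × ι', ⋃ (_ : p.1 ≠ p.2), {v : ι' → ℝ | v p.1 = v p.2} := by
      ext v; simp
    rw [hun]
    refine measure_iUnion_null fun p => ?_
    rcases eq_or_ne p.1 p.2 with hp | hp
    · simp [hp]
    · exact measure_mono_null (Set.iUnion_subset fun _ => subset_rfl) (aux_ties μ0 hp)
  have hdistinct : ∀ᵐ v ∂(Measure.pi fun _ : ι' => μ0), ∀ p q : ι', p ≠ q → v p ≠ v q := by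
    rw [ae_iff]
    have hset : {v : ι' → ℝ | ¬ ∀ p q : ι', p ≠ q → v p ≠ v q}
        = {v : ι' → ℝ | ∃ p : ι' × ι', p.1 ≠ p.2 ∧ v p.1 = v p.2} := by
      ext v
      simp only [Set.mem_setOf_eq]
      push_neg
      constructor
      · rintro ⟨p, q, hpq, heq⟩; exact ⟨(p, q), hpq, heq⟩
      · rintro ⟨p, hpq, heq⟩; exact ⟨p.1, p.2, hpq, heq⟩
    rw [hset]
    exact hnull
  have hae : ∀ᵐ v ∂(Measure.pi fun _ : ι' => μ0),
      ENNReal.ofReal (f v)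
        = ∑ e ∈ T, Set.indicator (S e) (fun w => ENNReal.ofReal ((w e)^2)) v := by
    filter_upwards [hdistinct] with v hv using hpt v hv
  -- the lintegral
  have hcard' : Fintype.card ι' = (A ∪ B).card := Fintype.card_coe _
  have hTcard : T.card = (A ∩ B).card := by
    refine Finset.card_bij (fun e _ => e.1) ?_ ?_ ?_
    · intro e he
      obtain ⟨h1, h2⟩ := (Finset.mem_filter.mp he).2
      exact Finset.mem_inter.mpr ⟨h1, h2⟩
    · intro e1 h1 e2 h2 hee
      exact Subtype.ext hee
    · intro b hb
      obtain ⟨h1, h2⟩ := Finset.mem_inter.mp hb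
      exact ⟨⟨b, Finset.mem_union_left B h1⟩,
        Finset.mem_filter.mpr ⟨Finset.mem_univ _, h1, h2⟩, rfl⟩
  have hlint : ∫⁻ v, ENNReal.ofReal (f v) ∂(Measure.pi fun _ : ι' => μ0)
      = ((A ∩ B).card : ℕ) * ENNReal.ofReal (1 / ((A ∪ B).card + 2)) := by
    rw [lintegral_congr_ae hae,
      lintegral_finset_sum _ (fun e _ =>
        Measurable.indicator
          (show Measurable fun w : ι' → ℝ => ENNReal.ofReal (w e ^ 2) from
            ENNReal.measurable_ofReal.comp ((measurable_pi_apply e).pow_const 2)) (hSm e))]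
    have : ∀ e ∈ T, ∫⁻ v, Set.indicator (S e) (fun w => ENNReal.ofReal ((w e)^2)) v
        ∂(Measure.pi fun _ : ι' => μ0) = ENNReal.ofReal (1 / ((A ∪ B).card + 2)) := by
      intro e _
      have := aux_single e
      rw [hcard'] at this
      exact this
    rw [Finset.sum_congr rfl this, Finset.sum_const, hTcard, nsmul_eq_mul]
  -- put everything together
  calc ∫ ω, (if xA ω = xB ω then xA ω * xB ω else 0) ∂ℙ
      = ∫ ω, f (Φ ω) ∂ℙ := by
        exact integral_congr_ae (ae_of_all _ hcomp)
    _ = ∫ v, f v ∂(Measure.map Φ ℙ) :=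
        (integral_map hΦ.aemeasurable hfm.aestronglyMeasurable).symm
    _ = ∫ v, f v ∂(Measure.pi fun _ : ι' => μ0) := by rw [hmap]
    _ = (∫⁻ v, ENNReal.ofReal (f v) ∂(Measure.pi fun _ : ι' => μ0)).toReal := by
        rw [integral_eq_lintegral_of_nonneg_ae (ae_of_all _ hfnn) hfm.aestronglyMeasurable]
    _ = ((A ∩ B).card : ℝ) / ((A ∪ B).card + 2) := by
        rw [hlint, ENNReal.toReal_mul, ENNReal.toReal_natCast,
          ENNReal.toReal_ofReal (by positivity)]
        rw [mul_one_div]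
end

section
/- With A, B finite nonempty sets, |A| = a, |B \ A| = β ≥ 1, |A ∪ B| = u, and i.i.d. Uniform(0,1) hash values h on A ∪ B, letting x_A, x_B be the maxima over A and B, one has E[x_A · x_B · 1_{x_A < x_B}] = (a/(a+1)) · (β/(u+2)). -/
open MeasureTheory ProbabilityTheory Set
open scoped ENNReal

/-- The law of the max of `n` iid uniforms on (0,1): density `n x^(n-1)`. -/
noncomputable def unifPow (n : ℕ) : Measure ℝ :=
  (volume.restrict (Set.Ioo (0:ℝ) 1)).withDensity fun x => ENNReal.ofReal ((n:ℝ) * x ^ (n-1))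

lemma integral_density (n : ℕ) (hn : 1 ≤ n) {c : ℝ} (hc0 : 0 ≤ c) :
    ∫ x in Set.Ioo (0:ℝ) c, (n:ℝ) * x ^ (n-1) = c ^ n := by
  obtain ⟨m, rfl⟩ := Nat.exists_eq_add_of_le hn
  rw [← integral_Ioc_eq_integral_Ioo, ← intervalIntegral.integral_of_le hc0]
  rw [Nat.add_sub_cancel_left, intervalIntegral.integral_const_mul, integral_pow]
  have : ((m:ℝ) + 1) ≠ 0 := by positivity
  field_simp
  push_cast
  ring

lemma lintegral_density (n : ℕ) (hn : 1 ≤ n) {c : ℝ} (hc0 : 0 ≤ c) :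
    ∫⁻ x in Set.Ioo (0:ℝ) c, ENNReal.ofReal ((n:ℝ) * x ^ (n-1)) = ENNReal.ofReal (c ^ n) := by
  rw [← ofReal_integral_eq_lintegral_ofReal, integral_density n hn hc0]
  · exact ((continuous_const.mul (continuous_pow _)).integrableOn_Icc).mono_set
      Set.Ioo_subset_Icc_self
  · filter_upwards [ae_restrict_mem measurableSet_Ioo] with x hx
    have : (0:ℝ) ≤ x := le_of_lt hx.1
    positivity
lemma unifPow_Iic (n : ℕ) (hn : 1 ≤ n) (t : ℝ) :
    unifPow n (Set.Iic t) = (ENNReal.ofReal (min t 1)) ^ n := by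
  rw [unifPow, withDensity_apply _ measurableSet_Iic,
    Measure.restrict_restrict measurableSet_Iic]
  rcases le_or_gt t 0 with ht | ht
  · have hset : Set.Iic t ∩ Set.Ioo (0:ℝ) 1 = ∅ := by
      ext x; simp only [Set.mem_inter_iff, Set.mem_Iic, Set.mem_Ioo, Set.mem_empty_iff_false,
        iff_false, not_and]
      intro hx h0 _; linarith
    have hmin : min t 1 ≤ 0 := le_trans (min_le_left _ _) ht
    rw [hset]
    simp [ENNReal.ofReal_eq_zero.mpr hmin, zero_pow (by omega : n ≠ 0)]
  · have hc0 : 0 ≤ min t 1 := le_min ht.le zero_le_one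
    have key : ∫⁻ x in Set.Ioo (0:ℝ) (min t 1), ENNReal.ofReal ((n:ℝ) * x ^ (n-1))
        = ENNReal.ofReal ((min t 1) ^ n) := lintegral_density n hn hc0
    rcases le_or_gt 1 t with h1 | h1
    · have hset : Set.Iic t ∩ Set.Ioo (0:ℝ) 1 = Set.Ioo (0:ℝ) (min t 1) := by
        rw [min_eq_right h1]
        ext x; simp only [Set.mem_inter_iff, Set.mem_Iic, Set.mem_Ioo]
        constructor
        · rintro ⟨_, h0, hx1⟩; exact ⟨h0, hx1⟩
        · rintro ⟨h0, hx1⟩; exact ⟨by linarith, h0, hx1⟩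
      rw [hset, key, ← ENNReal.ofReal_pow hc0]
    · have hmin : min t 1 = t := min_eq_left h1.le
      have hset : Set.Iic t ∩ Set.Ioo (0:ℝ) 1 = Set.Ioc (0:ℝ) t := by
        ext x; simp only [Set.mem_inter_iff, Set.mem_Iic, Set.mem_Ioo, Set.mem_Ioc]
        constructor
        · rintro ⟨hxt, h0, _⟩; exact ⟨h0, hxt⟩
        · rintro ⟨h0, hxt⟩; exact ⟨hxt, h0, by linarith⟩
      have hae : (Set.Ioc (0:ℝ) t : Set ℝ) =ᵐ[volume] Set.Ioo (0:ℝ) t :=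
        (Ioo_ae_eq_Ioc (a := (0:ℝ)) (b := t)).symm
      rw [hmin] at key hc0
      rw [hset, setLIntegral_congr hae, key, hmin, ← ENNReal.ofReal_pow hc0]

lemma unifPow_isProb (n : ℕ) (hn : 1 ≤ n) : IsProbabilityMeasure (unifPow n) := by
  constructor
  rw [unifPow, withDensity_apply _ MeasurableSet.univ, Measure.restrict_restrict
    MeasurableSet.univ, Set.univ_inter, lintegral_density n hn zero_le_one]
  simp

lemma unifPow_compl (n : ℕ) : unifPow n (Set.Ioo (0:ℝ) 1)ᶜ = 0 := by
  rw [unifPow, withDensity_apply _ measurableSet_Ioo.compl,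
    Measure.restrict_restrict measurableSet_Ioo.compl, Set.compl_inter_self]
  simp
lemma inner_eval (b : ℕ) (hb : 1 ≤ b) {x : ℝ} (hx : x ∈ Set.Ioo (0:ℝ) 1) :
    ∫ y, (if x < y then x * y else 0) ∂(unifPow b)
      = x * b * (1 - x ^ (b+1)) / (b+1) := by
  have hrepr : (fun y : ℝ => ENNReal.ofReal ((b:ℝ) * y ^ (b-1)))
      = fun y => (((b:ℝ) * y ^ (b-1)).toNNReal : ENNReal) := rfl
  rw [unifPow, hrepr, integral_withDensity_eq_integral_smul
    (f := fun y => Real.toNNReal ((b:ℝ) * y ^ (b-1)))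
    (by measurability) _]
  have hcong : ∀ y ∈ Set.Ioo (0:ℝ) 1,
      (Real.toNNReal ((b:ℝ) * y ^ (b-1))) • (if x < y then x * y else 0)
        = (Set.Ioi x).indicator (fun y => (b:ℝ) * y ^ (b-1) * (x * y)) y := by
    intro y hy
    have hy0 : (0:ℝ) ≤ (b:ℝ) * y ^ (b-1) :=
      mul_nonneg (Nat.cast_nonneg _) (pow_nonneg hy.1.le _)
    rw [NNReal.smul_def, Real.coe_toNNReal _ hy0, smul_eq_mul]
    by_cases hxy : x < y
    · rw [if_pos hxy, Set.indicator_of_mem (Set.mem_Ioi.mpr hxy)]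
    · rw [if_neg hxy, Set.indicator_of_notMem (by simpa using hxy), mul_zero]
  rw [setIntegral_congr_fun measurableSet_Ioo hcong,
    setIntegral_indicator measurableSet_Ioi]
  have hset : Set.Ioo (0:ℝ) 1 ∩ Set.Ioi x = Set.Ioo x 1 := by
    ext y
    simp only [Set.mem_inter_iff, Set.mem_Ioo, Set.mem_Ioi]
    constructor
    · rintro ⟨⟨_, hy1⟩, hxy⟩; exact ⟨hxy, hy1⟩
    · rintro ⟨hxy, hy1⟩; exact ⟨⟨lt_trans hx.1 hxy, hy1⟩, hxy⟩
  obtain ⟨m, rfl⟩ := Nat.exists_eq_add_of_le hb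
  rw [hset, ← integral_Ioc_eq_integral_Ioo, ← intervalIntegral.integral_of_le hx.2.le]
  have : ∀ y : ℝ, ((1+m:ℕ):ℝ) * y ^ ((1+m) - 1) * (x * y) = (x * (1+m:ℕ)) * y ^ (1+m) := by
    intro y
    simp only [Nat.add_sub_cancel_left]
    rw [pow_add, pow_one]
    ring
  simp only [this]
  rw [intervalIntegral.integral_const_mul, integral_pow]
  have h1 : ((1+m:ℕ):ℝ) + 1 ≠ 0 := by positivity
  push_cast
  field_simp
  try ring

lemma key_integral (a b : ℕ) (ha : 1 ≤ a) (hb : 1 ≤ b) :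
    ∫ z : ℝ × ℝ, (if z.1 < z.2 then z.1 * z.2 else 0) ∂((unifPow a).prod (unifPow b))
      = ((a:ℝ)/(a+1)) * ((b:ℝ)/(a+b+2)) := by
  haveI := unifPow_isProb a ha
  haveI := unifPow_isProb b hb
  set φ : ℝ × ℝ → ℝ := fun z => if z.1 < z.2 then z.1 * z.2 else 0 with hφ
  have hφm : Measurable φ :=
    Measurable.ite (measurableSet_lt measurable_fst measurable_snd)
      (measurable_fst.mul measurable_snd) measurable_const
  have hae : ∀ᵐ z : ℝ × ℝ ∂((unifPow a).prod (unifPow b)),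
      z.1 ∈ Set.Ioo (0:ℝ) 1 ∧ z.2 ∈ Set.Ioo (0:ℝ) 1 := by
    rw [ae_iff]
    refine measure_mono_null (fun z hz => ?_)
      (show ((unifPow a).prod (unifPow b))
        (((Set.Ioo (0:ℝ) 1)ᶜ ×ˢ Set.univ) ∪ (Set.univ ×ˢ (Set.Ioo (0:ℝ) 1)ᶜ)) = 0 from ?_)
    · simp only [Set.mem_setOf_eq, not_and_or] at hz
      rcases hz with hz | hz
      · exact Or.inl ⟨hz, Set.mem_univ _⟩
      · exact Or.inr ⟨Set.mem_univ _, hz⟩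
    · refine measure_union_null ?_ ?_ <;>
        rw [Measure.prod_prod] <;> simp [unifPow_compl]
  have hint : Integrable φ ((unifPow a).prod (unifPow b)) := by
    refine Integrable.mono' (integrable_const 1) hφm.aestronglyMeasurable ?_
    filter_upwards [hae] with z hz
    rw [hφ]
    simp only [Real.norm_eq_abs]
    by_cases hxy : z.1 < z.2
    · rw [if_pos hxy, abs_of_nonneg (by nlinarith [hz.1.1, hz.2.1] : (0:ℝ) ≤ z.1 * z.2)]
      nlinarith [hz.1.1, hz.1.2, hz.2.1, hz.2.2]
    · rw [if_neg hxy]; simp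
  rw [integral_prod _ hint]
  have houter : ∀ x ∈ Set.Ioo (0:ℝ) 1,
      (Real.toNNReal ((a:ℝ) * x ^ (a-1))) • (∫ y, φ (x, y) ∂(unifPow b))
        = ((a:ℝ)*(b:ℝ)/((b:ℝ)+1)) * (x ^ a - x ^ (a+b+1)) := by
    intro x hx
    have h1 : ∫ y, φ (x, y) ∂(unifPow b) = x * b * (1 - x ^ (b+1)) / (b+1) :=
      inner_eval b hb hx
    have hx0 : (0:ℝ) ≤ (a:ℝ) * x ^ (a-1) :=
      mul_nonneg (Nat.cast_nonneg _) (pow_nonneg hx.1.le _)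
    rw [h1, NNReal.smul_def, Real.coe_toNNReal _ hx0, smul_eq_mul]
    obtain ⟨m, rfl⟩ := Nat.exists_eq_add_of_le ha
    simp only [Nat.add_sub_cancel_left]
    have hpow : x ^ m * x = x ^ (1+m) := by rw [pow_add, pow_one]; ring
    have hb1 : ((b:ℝ)+1) ≠ 0 := by positivity
    field_simp
    rw [show (1+m) + b + 1 = (1+m) + (b+1) by ring, pow_add _ (1+m) (b+1),
      pow_add _ 1 m, pow_one]
    ring
  have hrepr : (fun x : ℝ => ENNReal.ofReal ((a:ℝ) * x ^ (a-1)))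
      = fun x => (((a:ℝ) * x ^ (a-1)).toNNReal : ENNReal) := rfl
  rw [unifPow, hrepr, integral_withDensity_eq_integral_smul
    (f := fun x => Real.toNNReal ((a:ℝ) * x ^ (a-1)))
    (by measurability) _,
    setIntegral_congr_fun measurableSet_Ioo houter,
    ← integral_Ioc_eq_integral_Ioo, ← intervalIntegral.integral_of_le zero_le_one,
    intervalIntegral.integral_const_mul, intervalIntegral.integral_sub
      (intervalIntegral.intervalIntegrable_pow a) (intervalIntegral.intervalIntegrable_pow _),
    integral_pow, integral_pow]
  have h2 : ((a:ℝ)+1) ≠ 0 := by positivity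
  have h3 : ((a:ℝ)+(b:ℝ)+1+1) ≠ 0 := by positivity
  have h4 : ((b:ℝ)+1) ≠ 0 := by positivity
  push_cast
  rw [one_pow, one_pow]
  field_simp
  ring
lemma law_aux {Ω ι : Type*} [MeasureSpace Ω] [IsProbabilityMeasure (ℙ : Measure Ω)]
    (T : Finset ι) (hT : T.Nonempty) (f : ι → Ω → ℝ) (hfm : ∀ i, Measurable (f i))
    (hprod : ∀ t : ℝ, ℙ (⋂ i ∈ T, f i ⁻¹' Set.Iic t) = ∏ i ∈ T, ℙ (f i ⁻¹' Set.Iic t))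
    (hu : ∀ i ∈ T, Measure.map (f i) ℙ = volume.restrict (Set.Ioo (0:ℝ) 1)) :
    Measure.map (fun ω => T.sup' hT fun i => f i ω) ℙ = unifPow T.card := by
  have hTc : 1 ≤ T.card := Finset.Nonempty.card_pos hT
  have hsupm : Measurable (fun ω => T.sup' hT fun i => f i ω) := by
    have := Finset.measurable_sup' hT (fun i _ => hfm i)
    convert this using 1
    ext ω
    rw [Finset.sup'_apply]
  haveI : IsProbabilityMeasure (Measure.map (fun ω => T.sup' hT fun i => f i ω) ℙ) :=
    Measure.isProbabilityMeasure_map hsupm.aemeasurable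
  haveI := unifPow_isProb T.card hTc
  refine MeasureTheory.Measure.ext_of_Iic _ _ (fun t => ?_)
  rw [Measure.map_apply hsupm measurableSet_Iic, unifPow_Iic T.card hTc t]
  have hpre : (fun ω => T.sup' hT fun i => f i ω) ⁻¹' Set.Iic t
      = ⋂ i ∈ T, f i ⁻¹' Set.Iic t := by
    ext ω
    simp [Finset.sup'_le_iff]
  have hvol : ∀ i ∈ T, ℙ (f i ⁻¹' Set.Iic t) = ENNReal.ofReal (min t 1) := by
    intro i hi
    have : ℙ (f i ⁻¹' Set.Iic t) = Measure.map (f i) ℙ (Set.Iic t) :=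
      (Measure.map_apply (hfm i) measurableSet_Iic).symm
    rw [this, hu i hi, Measure.restrict_apply measurableSet_Iic]
    rcases le_or_gt t 0 with ht | ht
    · have hset : Set.Iic t ∩ Set.Ioo (0:ℝ) 1 = ∅ := by
        ext x
        simp only [Set.mem_inter_iff, Set.mem_Iic, Set.mem_Ioo, Set.mem_empty_iff_false,
          iff_false, not_and]
        intro hx h0 _; linarith
      rw [hset]
      simp [ENNReal.ofReal_eq_zero.mpr (le_trans (min_le_left _ _) ht)]
    · rcases le_or_gt 1 t with h1 | h1
      · have hset : Set.Iic t ∩ Set.Ioo (0:ℝ) 1 = Set.Ioo (0:ℝ) 1 := by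
          ext x
          simp only [Set.mem_inter_iff, Set.mem_Iic, Set.mem_Ioo]
          constructor
          · rintro ⟨_, h0, hx1⟩; exact ⟨h0, hx1⟩
          · rintro ⟨h0, hx1⟩; exact ⟨by linarith, h0, hx1⟩
        rw [hset, Real.volume_Ioo, min_eq_right h1]
        norm_num
      · have hset : Set.Iic t ∩ Set.Ioo (0:ℝ) 1 = Set.Ioc (0:ℝ) t := by
          ext x
          simp only [Set.mem_inter_iff, Set.mem_Iic, Set.mem_Ioo, Set.mem_Ioc]
          constructor
          · rintro ⟨hxt, h0, _⟩; exact ⟨h0, hxt⟩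
          · rintro ⟨h0, hxt⟩; exact ⟨hxt, h0, by linarith⟩
        rw [hset, Real.volume_Ioc, min_eq_left h1.le, sub_zero]
  rw [hpre, hprod t, Finset.prod_congr rfl hvol, Finset.prod_const]
lemma pointwise_aux {ι : Type*} [DecidableEq ι] (A B : Finset ι)
    (hA : A.Nonempty) (hB : B.Nonempty) (hβ : (B \ A).Nonempty) (g : ι → ℝ) :
    (if A.sup' hA g < B.sup' hB g then A.sup' hA g * B.sup' hB g else 0)
      = (if A.sup' hA g < (B \ A).sup' hβ g
          then A.sup' hA g * (B \ A).sup' hβ g else 0) := by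
  have hrq : (B \ A).sup' hβ g ≤ B.sup' hB g := by
    apply Finset.sup'_le
    intro e he
    exact Finset.le_sup' (f := g) (Finset.mem_sdiff.mp he).1
  have hqm : B.sup' hB g ≤ max (A.sup' hA g) ((B \ A).sup' hβ g) := by
    apply Finset.sup'_le
    intro e he
    by_cases heA : e ∈ A
    · exact le_max_of_le_left (Finset.le_sup' (f := g) heA)
    · exact le_max_of_le_right (Finset.le_sup' (f := g) (Finset.mem_sdiff.mpr ⟨he, heA⟩))
  by_cases hpr : A.sup' hA g < (B \ A).sup' hβ g
  · have hqr : B.sup' hB g = (B \ A).sup' hβ g :=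
      le_antisymm (by simpa [max_eq_right hpr.le] using hqm) hrq
    rw [if_pos (by rw [hqr]; exact hpr), if_pos hpr, hqr]
  · push_neg at hpr
    have hnq : ¬ A.sup' hA g < B.sup' hB g :=
      not_lt.mpr (le_trans hqm (by simp [max_eq_left hpr]))
    rw [if_neg hnq, if_neg (not_lt.mpr hpr)]

theorem exp_prod_indicator_lt
    {Ω ι : Type*} [MeasureSpace Ω] [IsProbabilityMeasure (ℙ : Measure Ω)]
    [DecidableEq ι]
    (A B : Finset ι) (hA : A.Nonempty) (hB : B.Nonempty)
    (h : ι → Ω → ℝ)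
    (hmeas : ∀ e, Measurable (h e))
    (hindep : iIndepFun
      (fun e : {x // x ∈ A ∪ B} => h e.1) ℙ)
    (hunif : ∀ e ∈ A ∪ B, Measure.map (h e) ℙ = volume.restrict (Set.Ioo (0 : ℝ) 1))
    (xA xB : Ω → ℝ)
    (hxA : ∀ ω, xA ω = A.sup' hA fun e => h e ω)
    (hxB : ∀ ω, xB ω = B.sup' hB fun e => h e ω)
    (hβ : (B \ A).Nonempty) :
    ∫ ω, (if xA ω < xB ω then xA ω * xB ω else 0) ∂ℙ
      = ((A.card : ℝ) / (A.card + 1)) * (((B \ A).card : ℝ) / ((A ∪ B).card + 2)) := by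
  classical
  have hxA' : xA = fun ω => A.sup' hA fun e => h e ω := funext hxA
  have hxB' : xB = fun ω => B.sup' hB fun e => h e ω := funext hxB
  subst hxA' hxB'
  have hpt : ∀ ω, (if (A.sup' hA fun e => h e ω) < (B.sup' hB fun e => h e ω)
      then (A.sup' hA fun e => h e ω) * (B.sup' hB fun e => h e ω) else 0)
      = (if (A.sup' hA fun e => h e ω) < ((B \ A).sup' hβ fun e => h e ω)
      then (A.sup' hA fun e => h e ω) * ((B \ A).sup' hβ fun e => h e ω) else 0) :=
    fun ω => pointwise_aux A B hA hB hβ (fun e => h e ω)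
  rw [integral_congr_ae (ae_of_all _ hpt)]
  -- index subsets of the subtype
  set SA : Finset {x // x ∈ A ∪ B} := (A ∪ B).attach.filter (fun i => (i : ι) ∈ A) with hSA
  set SC : Finset {x // x ∈ A ∪ B} := (A ∪ B).attach.filter (fun i => (i : ι) ∈ B \ A) with hSC
  obtain ⟨eA, heA⟩ := id hA
  obtain ⟨eC, heC⟩ := id hβ
  have hSAne : SA.Nonempty :=
    ⟨⟨eA, Finset.mem_union_left B heA⟩,
      by simp only [hSA, Finset.mem_filter, Finset.mem_attach, true_and]; exact heA⟩
  have hSCne : SC.Nonempty :=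
    ⟨⟨eC, Finset.mem_union_right A (Finset.mem_sdiff.mp heC).1⟩,
      by simp only [hSC, Finset.mem_filter, Finset.mem_attach, true_and]; exact heC⟩
  have hSAim : SA.image Subtype.val = A := by
    ext e
    simp only [Finset.mem_image, hSA, Finset.mem_filter, Finset.mem_attach, true_and]
    constructor
    · rintro ⟨i, hi, rfl⟩; exact hi
    · intro he; exact ⟨⟨e, Finset.mem_union_left B he⟩, he, rfl⟩
  have hSCim : SC.image Subtype.val = B \ A := by
    ext e
    simp only [Finset.mem_image, hSC, Finset.mem_filter, Finset.mem_attach, true_and]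
    constructor
    · rintro ⟨i, hi, rfl⟩; exact hi
    · intro he
      exact ⟨⟨e, Finset.mem_union_right A (Finset.mem_sdiff.mp he).1⟩, he, rfl⟩
  have hSAcard : SA.card = A.card := by
    have hc := Finset.card_image_of_injective SA Subtype.val_injective
    rw [hSAim] at hc
    exact hc.symm
  have hSCcard : SC.card = (B \ A).card := by
    have hc := Finset.card_image_of_injective SC Subtype.val_injective
    rw [hSCim] at hc
    exact hc.symm
  -- identification of the sups
  have hsupA : ∀ ω, (SA.sup' hSAne fun i => h (i : ι) ω) = A.sup' hA fun e => h e ω := by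
    intro ω
    apply le_antisymm
    · apply Finset.sup'_le
      intro i hi
      rw [hSA, Finset.mem_filter] at hi
      exact Finset.le_sup' (f := fun e => h e ω) hi.2
    · apply Finset.sup'_le
      intro e he
      exact Finset.le_sup' (f := fun i : {x // x ∈ A ∪ B} => h (i : ι) ω)
        (show (⟨e, Finset.mem_union_left B he⟩ : {x // x ∈ A ∪ B}) ∈ SA by
          simp only [hSA, Finset.mem_filter, Finset.mem_attach, true_and]; exact he)
  have hsupC : ∀ ω, (SC.sup' hSCne fun i => h (i : ι) ω)
      = (B \ A).sup' hβ fun e => h e ω := by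
    intro ω
    apply le_antisymm
    · apply Finset.sup'_le
      intro i hi
      rw [hSC, Finset.mem_filter] at hi
      exact Finset.le_sup' (f := fun e => h e ω) hi.2
    · apply Finset.sup'_le
      intro e he
      exact Finset.le_sup' (f := fun i : {x // x ∈ A ∪ B} => h (i : ι) ω)
        (show (⟨e, Finset.mem_union_right A (Finset.mem_sdiff.mp he).1⟩ :
            {x // x ∈ A ∪ B}) ∈ SC by
          simp only [hSC, Finset.mem_filter, Finset.mem_attach, true_and]; exact he)
  -- laws of the two maxima
  have hlawA : Measure.map (fun ω => A.sup' hA fun e => h e ω) ℙ = unifPow A.card := by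
    have hl := law_aux SA hSAne (fun i => h (i : ι)) (fun i => hmeas _)
      (fun t => hindep.measure_inter_preimage_eq_mul SA (fun i _ => measurableSet_Iic))
      (fun i hi => hunif i.1 i.2)
    rw [show (fun ω => SA.sup' hSAne fun i => h (i : ι) ω)
      = fun ω => A.sup' hA fun e => h e ω from funext hsupA, hSAcard] at hl
    exact hl
  have hlawC : Measure.map (fun ω => (B \ A).sup' hβ fun e => h e ω) ℙ
      = unifPow (B \ A).card := by
    have hl := law_aux SC hSCne (fun i => h (i : ι)) (fun i => hmeas _)
      (fun t => hindep.measure_inter_preimage_eq_mul SC (fun i _ => measurableSet_Iic))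
      (fun i hi => hunif i.1 i.2)
    rw [show (fun ω => SC.sup' hSCne fun i => h (i : ι) ω)
      = fun ω => (B \ A).sup' hβ fun e => h e ω from funext hsupC, hSCcard] at hl
    exact hl
  -- independence of the two maxima
  have hdisj : Disjoint SA SC := by
    rw [Finset.disjoint_left]
    intro i hiA hiC
    rw [hSA, Finset.mem_filter] at hiA
    rw [hSC, Finset.mem_filter] at hiC
    exact (Finset.mem_sdiff.mp hiC.2).2 hiA.2
  have hvecind := hindep.indepFun_finset SA SC hdisj (fun i => hmeas _)
  have hSAatt : SA.attach.Nonempty := ⟨⟨hSAne.choose, hSAne.choose_spec⟩, Finset.mem_attach _ _⟩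
  have hSCatt : SC.attach.Nonempty := ⟨⟨hSCne.choose, hSCne.choose_spec⟩, Finset.mem_attach _ _⟩
  set gA : ({i // i ∈ SA} → ℝ) → ℝ := fun v => SA.attach.sup' hSAatt fun j => v j with hgA
  set gC : ({i // i ∈ SC} → ℝ) → ℝ := fun v => SC.attach.sup' hSCatt fun j => v j with hgC
  have hgAm : Measurable gA := by
    have := Finset.measurable_sup'
      (f := fun (j : {i // i ∈ SA}) (v : {i // i ∈ SA} → ℝ) => v j)
      hSAatt (fun j _ => measurable_pi_apply j)
    convert this using 1
    ext v
    rw [Finset.sup'_apply]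
  have hgCm : Measurable gC := by
    have := Finset.measurable_sup'
      (f := fun (j : {i // i ∈ SC}) (v : {i // i ∈ SC} → ℝ) => v j)
      hSCatt (fun j _ => measurable_pi_apply j)
    convert this using 1
    ext v
    rw [Finset.sup'_apply]
  have hcomp := hvecind.comp hgAm hgCm
  have hgAeq : (gA ∘ fun ω (i : {i // i ∈ SA}) => h ((i : {x // x ∈ A ∪ B}) : ι) ω)
      = fun ω => A.sup' hA fun e => h e ω := by
    funext ω
    rw [← hsupA ω]
    show (SA.attach.sup' hSAatt fun j => h ((j : {x // x ∈ A ∪ B}) : ι) ω) = _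
    apply le_antisymm
    · apply Finset.sup'_le
      intro j _
      exact Finset.le_sup' (f := fun i : {x // x ∈ A ∪ B} => h (i : ι) ω) j.2
    · apply Finset.sup'_le
      intro i hi
      exact Finset.le_sup'
        (f := fun j : {i // i ∈ SA} => h ((j : {x // x ∈ A ∪ B}) : ι) ω)
        (Finset.mem_attach _ (⟨i, hi⟩ : {i // i ∈ SA}))
  have hgCeq : (gC ∘ fun ω (i : {i // i ∈ SC}) => h ((i : {x // x ∈ A ∪ B}) : ι) ω)
      = fun ω => (B \ A).sup' hβ fun e => h e ω := by
    funext ω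
    rw [← hsupC ω]
    show (SC.attach.sup' hSCatt fun j => h ((j : {x // x ∈ A ∪ B}) : ι) ω) = _
    apply le_antisymm
    · apply Finset.sup'_le
      intro j _
      exact Finset.le_sup' (f := fun i : {x // x ∈ A ∪ B} => h (i : ι) ω) j.2
    · apply Finset.sup'_le
      intro i hi
      exact Finset.le_sup'
        (f := fun j : {i // i ∈ SC} => h ((j : {x // x ∈ A ∪ B}) : ι) ω)
        (Finset.mem_attach _ (⟨i, hi⟩ : {i // i ∈ SC}))
  have hIndep : IndepFun (fun ω => A.sup' hA fun e => h e ω)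
      (fun ω => (B \ A).sup' hβ fun e => h e ω) ℙ := by
    rw [← hgAeq, ← hgCeq]
    exact hcomp
  -- measurability of the maxima
  have mxA : Measurable (fun ω => A.sup' hA fun e => h e ω) := by
    have := Finset.measurable_sup' hA (fun e _ => hmeas e)
    convert this using 1
    ext ω
    rw [Finset.sup'_apply]
  have mxC : Measurable (fun ω => (B \ A).sup' hβ fun e => h e ω) := by
    have := Finset.measurable_sup' hβ (fun e _ => hmeas e)
    convert this using 1
    ext ω
    rw [Finset.sup'_apply]
  have hpair := (indepFun_iff_map_prod_eq_prod_map_map mxA.aemeasurable mxC.aemeasurable).mp hIndep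
  have hφm : Measurable (fun z : ℝ × ℝ => if z.1 < z.2 then z.1 * z.2 else 0) :=
    Measurable.ite (measurableSet_lt measurable_fst measurable_snd)
      (measurable_fst.mul measurable_snd) measurable_const
  have hmap : ∫ ω, (if (A.sup' hA fun e => h e ω) < ((B \ A).sup' hβ fun e => h e ω)
      then (A.sup' hA fun e => h e ω) * ((B \ A).sup' hβ fun e => h e ω) else 0) ∂ℙ
      = ∫ z : ℝ × ℝ, (if z.1 < z.2 then z.1 * z.2 else 0)
        ∂(Measure.map (fun ω => ((A.sup' hA fun e => h e ω),
            ((B \ A).sup' hβ fun e => h e ω))) ℙ) :=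
    (integral_map (mxA.prodMk mxC).aemeasurable hφm.aestronglyMeasurable).symm
  rw [hmap, hpair, hlawA, hlawC,
    key_integral A.card (B \ A).card hA.card_pos hβ.card_pos]
  have hcard : (A ∪ B).card = A.card + (B \ A).card := by
    rw [← Finset.union_sdiff_self_eq_union (s := A) (t := B),
      Finset.card_union_of_disjoint Finset.disjoint_sdiff]
  rw [hcard]
  push_cast
  ring
end

section
/- With the setup of i.i.d. Uniform(0,1) hash values on A ∪ B and maxima x_A over A and x_B over B, where |A| = a, |B| = b, |A ∩ B| = n, |A ∪ B| = u, the covariance satisfies Cov(x_A, x_B) = n/((u+2)(a+1)(b+1)). -/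
open MeasureTheory ProbabilityTheory Set
open scoped ENNReal

lemma cmm_int01 (k : ℕ) : ∫ s in (0:ℝ)..1, s^k = 1/((k:ℝ)+1) := by
  rw [integral_pow]; norm_num

lemma cmm_L_inner (q n : ℕ) {s : ℝ} (hs : s ∈ Set.Ioo (0:ℝ) 1) :
    ∫ t in (0:ℝ)..1, t^q * min s t ^ n
      = s^(q+n+1)/((q:ℝ)+n+1) + s^n/((q:ℝ)+1) - s^(q+n+1)/((q:ℝ)+1) := by
  obtain ⟨hs0, hs1⟩ := hs
  have h1 : ∫ t in (0:ℝ)..s, t^q * min s t ^ n = ∫ t in (0:ℝ)..s, t^(q+n) := by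
    apply intervalIntegral.integral_congr
    intro t ht
    rw [Set.uIcc_of_le hs0.le] at ht
    simp only [min_eq_right ht.2, pow_add]
  have h2 : ∫ t in s..1, t^q * min s t ^ n = ∫ t in s..1, t^q * s ^ n := by
    apply intervalIntegral.integral_congr
    intro t ht
    rw [Set.uIcc_of_le hs1.le] at ht
    simp only [min_eq_left ht.1]
  have hcont : Continuous fun t : ℝ => t^q * min s t ^ n := by
    exact (continuous_pow q).mul ((continuous_const.min continuous_id).pow n)
  have hsplit := intervalIntegral.integral_add_adjacent_intervals
    (μ := volume) (a := (0:ℝ)) (b := s) (c := 1)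
    (hcont.intervalIntegrable 0 s) (hcont.intervalIntegrable s 1)
  rw [← hsplit, h1, h2, integral_pow, intervalIntegral.integral_mul_const, integral_pow]
  push_cast
  ring

lemma cmm_phi_inner (p q n : ℕ) {s : ℝ} (hs : s ∈ Set.Ioo (0:ℝ) 1) :
    (∫ t in Set.Ioo (0:ℝ) 1, (1 - s^(p+n) - t^(q+n) + s^p * (t^q * min s t ^ n)))
    = (1 - 1/((q:ℝ)+n+1)) * s^0 + (-1 + 1/((q:ℝ)+1)) * s^(p+n)
      + (1/((q:ℝ)+n+1) - 1/((q:ℝ)+1)) * s^(p+q+n+1) := by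
  have hq1 : (0:ℝ) < (q:ℝ)+1 := by positivity
  have hqn1 : (0:ℝ) < (q:ℝ)+n+1 := by positivity
  rw [← integral_Ioc_eq_integral_Ioo,
      ← intervalIntegral.integral_of_le (by norm_num : (0:ℝ) ≤ 1)]
  have hc1 : Continuous fun t : ℝ => 1 - s^(p+n) - t^(q+n) := by
    exact continuous_const.sub (continuous_pow _)
  have hc2 : Continuous fun t : ℝ => s^p * (t^q * min s t ^ n) := by
    exact continuous_const.mul ((continuous_pow q).mul
      ((continuous_const.min continuous_id).pow n))
  rw [intervalIntegral.integral_add (hc1.intervalIntegrable 0 1)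
      (hc2.intervalIntegrable 0 1),
    intervalIntegral.integral_const_mul, cmm_L_inner q n hs]
  have : (fun t : ℝ => 1 - s^(p+n) - t^(q+n))
      = fun t : ℝ => (1 - s^(p+n)) * t^0 + (-1) * t^(q+n) := by funext t; ring
  rw [this, intervalIntegral.integral_add
      (f := fun t : ℝ => (1 - s^(p+n)) * t^0) (g := fun t : ℝ => (-1) * t^(q+n))
      (((continuous_const.mul (continuous_pow 0))).intervalIntegrable 0 1)
      (((continuous_const.mul (continuous_pow (q+n)))).intervalIntegrable 0 1),
    intervalIntegral.integral_const_mul, intervalIntegral.integral_const_mul,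
    cmm_int01, cmm_int01]
  field_simp
  push_cast
  ring

lemma cmm_phi_outer (p q n : ℕ) :
    (∫ s in Set.Ioo (0:ℝ) 1,
      ((1 - 1/((q:ℝ)+n+1)) * s^0 + (-1 + 1/((q:ℝ)+1)) * s^(p+n)
        + (1/((q:ℝ)+n+1) - 1/((q:ℝ)+1)) * s^(p+q+n+1)))
    = 1 - 1/((p:ℝ)+n+1) - 1/((q:ℝ)+n+1) + 1/(((q:ℝ)+n+1)*((p:ℝ)+q+n+2))
      + 1/(((q:ℝ)+1)*((p:ℝ)+n+1)) - 1/(((q:ℝ)+1)*((p:ℝ)+q+n+2)) := by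
  have hq1 : (0:ℝ) < (q:ℝ)+1 := by positivity
  have hqn1 : (0:ℝ) < (q:ℝ)+n+1 := by positivity
  have hpn1 : (0:ℝ) < (p:ℝ)+n+1 := by positivity
  have hu2 : (0:ℝ) < (p:ℝ)+q+n+2 := by positivity
  rw [← integral_Ioc_eq_integral_Ioo,
      ← intervalIntegral.integral_of_le (by norm_num : (0:ℝ) ≤ 1)]
  rw [intervalIntegral.integral_add
      (f := fun x : ℝ => (1 - 1/((q:ℝ)+n+1)) * x^0 + (-1 + 1/((q:ℝ)+1)) * x^(p+n))
      (g := fun x : ℝ => (1/((q:ℝ)+n+1) - 1/((q:ℝ)+1)) * x^(p+q+n+1)) (by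
        exact ((continuous_const.mul (continuous_pow 0)).add
          (continuous_const.mul (continuous_pow (p+n)))).intervalIntegrable 0 1)
      (((continuous_const.mul (continuous_pow (p+q+n+1)))).intervalIntegrable 0 1),
    intervalIntegral.integral_add
      (f := fun x : ℝ => (1 - 1/((q:ℝ)+n+1)) * x^0)
      (g := fun x : ℝ => (-1 + 1/((q:ℝ)+1)) * x^(p+n))
      (((continuous_const.mul (continuous_pow 0))).intervalIntegrable 0 1)
      (((continuous_const.mul (continuous_pow (p+n)))).intervalIntegrable 0 1),
    intervalIntegral.integral_const_mul, intervalIntegral.integral_const_mul,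
    intervalIntegral.integral_const_mul, cmm_int01, cmm_int01, cmm_int01]
  push_cast
  field_simp
  ring

set_option maxHeartbeats 1000000 in
theorem cov_max_max
    {Ω ι : Type*} [MeasureSpace Ω] [IsProbabilityMeasure (ℙ : Measure Ω)]
    [DecidableEq ι]
    (A B : Finset ι) (hA : A.Nonempty) (hB : B.Nonempty)
    (h : ι → Ω → ℝ)
    (hmeas : ∀ e, Measurable (h e))
    (hindep : iIndepFun
      (fun e : {x // x ∈ A ∪ B} => h e.1) ℙ)
    (hunif : ∀ e ∈ A ∪ B, Measure.map (h e) ℙ = volume.restrict (Set.Ioo (0 : ℝ) 1))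
    (xA xB : Ω → ℝ)
    (hxA : ∀ ω, xA ω = A.sup' hA fun e => h e ω)
    (hxB : ∀ ω, xB ω = B.sup' hB fun e => h e ω) :
    (∫ ω, xA ω * xB ω ∂ℙ) - (∫ ω, xA ω ∂ℙ) * (∫ ω, xB ω ∂ℙ)
      = ((A ∩ B).card : ℝ)
        / (((A ∪ B).card + 2) * (A.card + 1) * (B.card + 1)) := by
  classical
  set p := (A \ B).card with hp
  set q := (B \ A).card with hq
  set n := (A ∩ B).card with hn
  have hA_card : A.card = p + n := (Finset.card_sdiff_add_card_inter A B).symm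
  have hB_card : B.card = q + n := by
    rw [hq, hn, Finset.inter_comm]
    exact (Finset.card_sdiff_add_card_inter B A).symm
  have hU_card : (A ∪ B).card = p + q + n := by
    have := Finset.card_union_add_card_inter A B
    omega
  -- measurability
  have hmA : Measurable xA := by
    have h1 : Measurable (A.sup' hA h) := Finset.measurable_sup' hA (fun e _ => hmeas e)
    have h2 : xA = A.sup' hA h := by
      funext ω; rw [hxA, Finset.sup'_apply]
    rwa [h2]
  have hmB : Measurable xB := by
    have h1 : Measurable (B.sup' hB h) := Finset.measurable_sup' hB (fun e _ => hmeas e)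
    have h2 : xB = B.sup' hB h := by
      funext ω; rw [hxB, Finset.sup'_apply]
    rwa [h2]
  -- single CDF for each h e
  have hIic : ∀ e ∈ A ∪ B, ∀ r : ℝ, 0 < r → r ≤ 1 →
      ℙ (h e ⁻¹' Iic r) = ENNReal.ofReal r := by
    intro e he r hr0 hr1
    rw [← Measure.map_apply (hmeas e) measurableSet_Iic, hunif e he,
      Measure.restrict_apply measurableSet_Iic]
    rcases eq_or_lt_of_le hr1 with rfl | hr1
    · have : Iic (1:ℝ) ∩ Ioo 0 1 = Ioo 0 1 := by
        apply inter_eq_self_of_subset_right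
        intro x hx; exact le_of_lt hx.2
      rw [this, Real.volume_Ioo]; norm_num
    · have : Iic r ∩ Ioo (0:ℝ) 1 = Ioc 0 r := by
        ext x
        simp only [mem_inter_iff, mem_Iic, mem_Ioo, mem_Ioc]
        constructor
        · rintro ⟨hxr, hx0, _⟩; exact ⟨hx0, hxr⟩
        · rintro ⟨hx0, hxr⟩; exact ⟨hxr, hx0, lt_of_le_of_lt hxr hr1⟩
      rw [this, Real.volume_Ioc]; norm_num
  -- a.e. all h e in Ioo 0 1
  have hae : ∀ᵐ ω ∂(ℙ : Measure Ω), ∀ e ∈ A ∪ B, h e ω ∈ Ioo (0:ℝ) 1 := by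
    have key : ∀ᵐ ω ∂(ℙ : Measure Ω), ∀ e ∈ ((A ∪ B : Finset ι) : Set ι),
        h e ω ∈ Ioo (0:ℝ) 1 := by
      rw [MeasureTheory.ae_ball_iff ((A ∪ B).countable_toSet)]
      intro e he'
      have he : e ∈ A ∪ B := Finset.mem_coe.mp he'
      have h1 : ℙ (h e ⁻¹' Ioo (0:ℝ) 1) = 1 := by
        rw [← Measure.map_apply (hmeas e) measurableSet_Ioo, hunif e he,
          Measure.restrict_apply measurableSet_Ioo, inter_self, Real.volume_Ioo]
        norm_num
      have := prob_compl_eq_zero_iff ((hmeas e) measurableSet_Ioo) |>.mpr h1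
      filter_upwards [measure_eq_zero_iff_ae_notMem.mp this] with ω hω
      exact not_not.mp hω
    filter_upwards [key] with ω hω e he
    exact hω e (Finset.mem_coe.mpr he)
  have haeA : ∀ᵐ ω ∂(ℙ : Measure Ω), xA ω ∈ Ioo (0:ℝ) 1 := by
    filter_upwards [hae] with ω hω
    obtain ⟨e₀, he₀⟩ := id hA
    rw [hxA]
    constructor
    · exact lt_of_lt_of_le (hω e₀ (Finset.mem_union_left _ he₀)).1
        (Finset.le_sup' (fun e => h e ω) he₀)
    · exact (Finset.sup'_lt_iff hA).mpr
        (fun e he => (hω e (Finset.mem_union_left _ he)).2)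
  have haeB : ∀ᵐ ω ∂(ℙ : Measure Ω), xB ω ∈ Ioo (0:ℝ) 1 := by
    filter_upwards [hae] with ω hω
    obtain ⟨e₀, he₀⟩ := id hB
    rw [hxB]
    constructor
    · exact lt_of_lt_of_le (hω e₀ (Finset.mem_union_right _ he₀)).1
        (Finset.le_sup' (fun e => h e ω) he₀)
    · exact (Finset.sup'_lt_iff hB).mpr
        (fun e he => (hω e (Finset.mem_union_right _ he)).2)
  -- joint CDF
  have hUV : ∀ s t : ℝ, 0 < s → s ≤ 1 → 0 < t → t ≤ 1 →
      ℙ ({ω | xA ω ≤ s} ∩ {ω | xB ω ≤ t})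
        = ENNReal.ofReal (s^p * (t^q * min s t ^ n)) := by
    intro s t hs0 hs1 ht0 ht1
    set r : ι → ℝ := fun e => if e ∈ A then (if e ∈ B then min s t else s) else t
      with hrdef
    have hr_mem : ∀ e ∈ A ∪ B, 0 < r e ∧ r e ≤ 1 := by
      intro e _
      by_cases heA : e ∈ A
      · by_cases heB : e ∈ B
        · simp only [hrdef, heA, heB, if_true]
          exact ⟨lt_min hs0 ht0, le_trans (min_le_left _ _) hs1⟩
        · simp only [hrdef, heA, heB, if_true, if_false]
          exact ⟨hs0, hs1⟩
      · simp only [hrdef, heA, if_false]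
        exact ⟨ht0, ht1⟩
    have hset : {ω | xA ω ≤ s} ∩ {ω | xB ω ≤ t}
        = ⋂ i : {x // x ∈ A ∪ B}, (h i.1) ⁻¹' Iic (r i.1) := by
      ext ω
      simp only [mem_inter_iff, mem_setOf_eq, mem_iInter, mem_preimage, mem_Iic,
        hxA, hxB, Finset.sup'_le_iff]
      constructor
      · rintro ⟨h1, h2⟩ ⟨e, he⟩
        by_cases heA : e ∈ A <;> by_cases heB : e ∈ B <;>
          simp only [hrdef, heA, heB, if_true, if_false, le_min_iff]
        · exact ⟨h1 e heA, h2 e heB⟩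
        · exact h1 e heA
        · exact h2 e heB
        · exact absurd (Finset.mem_union.mp he) (by simp [heA, heB])
      · intro h12
        constructor
        · intro e he
          have := h12 ⟨e, Finset.mem_union_left _ he⟩
          simp only [hrdef, he, if_true] at this
          by_cases heB : e ∈ B
          · simp only [heB, if_true] at this
            exact le_trans this (min_le_left _ _)
          · simpa [heB] using this
        · intro e he
          have := h12 ⟨e, Finset.mem_union_right _ he⟩
          by_cases heA : e ∈ A
          · simp only [hrdef, heA, he, if_true] at this
            exact le_trans this (min_le_right _ _)
          · simpa [hrdef, heA] using this
    rw [hset, hindep.meas_iInter (fun i => ⟨Iic (r i.1), measurableSet_Iic, rfl⟩)]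
    have heach : ∀ i : {x // x ∈ A ∪ B},
        ℙ ((h i.1) ⁻¹' Iic (r i.1)) = ENNReal.ofReal (r i.1) := by
      intro i
      exact hIic i.1 i.2 (r i.1) (hr_mem i.1 i.2).1 (hr_mem i.1 i.2).2
    rw [Finset.prod_congr rfl (fun i _ => heach i),
      Finset.prod_coe_sort (A ∪ B) (fun e => ENNReal.ofReal (r e)),
      ← ENNReal.ofReal_prod_of_nonneg (fun e he => (hr_mem e he).1.le)]
    congr 1
    have hsplitU : A ∪ B = (A \ B) ∪ (A ∩ B) ∪ (B \ A) := by
      ext e; simp only [Finset.mem_union, Finset.mem_sdiff, Finset.mem_inter]; tauto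
    rw [hsplitU, Finset.prod_union, Finset.prod_union]
    · have e1 : ∀ e ∈ A \ B, r e = s := by
        intro e he
        simp only [Finset.mem_sdiff] at he
        simp [hrdef, he.1, he.2]
      have e2 : ∀ e ∈ A ∩ B, r e = min s t := by
        intro e he
        simp only [Finset.mem_inter] at he
        simp [hrdef, he.1, he.2]
      have e3 : ∀ e ∈ B \ A, r e = t := by
        intro e he
        simp only [Finset.mem_sdiff] at he
        simp [hrdef, he.2]
      rw [Finset.prod_congr rfl e1, Finset.prod_congr rfl e2,
        Finset.prod_congr rfl e3, Finset.prod_const, Finset.prod_const,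
        Finset.prod_const, ← hp, ← hq, ← hn]
      ring
    · simp only [Finset.disjoint_left, Finset.mem_sdiff, Finset.mem_inter]
      tauto
    · simp only [Finset.disjoint_left, Finset.mem_union, Finset.mem_sdiff,
        Finset.mem_inter]
      tauto
  -- marginal CDFs
  have hcdfA : ∀ s : ℝ, 0 < s → s ≤ 1 →
      ℙ {ω | xA ω ≤ s} = ENNReal.ofReal (s^(p+n)) := by
    intro s hs0 hs1
    have hcongr : ({ω | xA ω ≤ s} : Set Ω) =ᵐ[ℙ] (({ω | xA ω ≤ s} ∩ {ω | xB ω ≤ 1} : Set Ω)) := by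
      filter_upwards [haeB] with ω hω
      simp only [eq_iff_iff, mem_inter_iff, mem_setOf_eq]
      exact ⟨fun h1 => ⟨h1, hω.2.le⟩, fun h1 => h1.1⟩
    rw [measure_congr hcongr, hUV s 1 hs0 hs1 one_pos le_rfl,
      min_eq_left hs1, one_pow, one_mul, ← pow_add]
  have hcdfB : ∀ t : ℝ, 0 < t → t ≤ 1 →
      ℙ {ω | xB ω ≤ t} = ENNReal.ofReal (t^(q+n)) := by
    intro t ht0 ht1
    have hcongr : ({ω | xB ω ≤ t} : Set Ω) =ᵐ[ℙ] (({ω | xA ω ≤ 1} ∩ {ω | xB ω ≤ t} : Set Ω)) := by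
      filter_upwards [haeA] with ω hω
      simp only [eq_iff_iff, mem_inter_iff, mem_setOf_eq]
      exact ⟨fun h1 => ⟨hω.2.le, h1⟩, fun h1 => h1.2⟩
    rw [measure_congr hcongr, hUV 1 t one_pos le_rfl ht0 ht1,
      min_eq_right ht1, one_pow, one_mul, ← pow_add]
  -- tail joint probability
  have hPhiR : ∀ s t : ℝ, s ∈ Ioo (0:ℝ) 1 → t ∈ Ioo (0:ℝ) 1 →
      (ℙ {ω | s < xA ω ∧ t < xB ω}).toReal
        = 1 - s^(p+n) - t^(q+n) + s^p * (t^q * min s t ^ n) := by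
    intro s t hs ht
    have hUm : MeasurableSet {ω | xA ω ≤ s} := hmA measurableSet_Iic
    have hVm : MeasurableSet {ω | xB ω ≤ t} := hmB measurableSet_Iic
    have hcompl : {ω | s < xA ω ∧ t < xB ω}
        = ({ω | xA ω ≤ s} ∪ {ω | xB ω ≤ t})ᶜ := by
      ext ω; simp [not_le, not_or]
    rw [hcompl]
    have hsum := measure_union_add_inter {ω | xA ω ≤ s} (μ := ℙ) hVm
    have hcomplP := prob_compl_eq_one_sub (μ := ℙ) (hUm.union hVm)
    have hU := hcdfA s hs.1 hs.2.le
    have hV := hcdfB t ht.1 ht.2.le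
    have hI := hUV s t hs.1 hs.2.le ht.1 ht.2.le
    have t1 : (ℙ ({ω | xA ω ≤ s} ∪ {ω | xB ω ≤ t})).toReal
        + (ℙ ({ω | xA ω ≤ s} ∩ {ω | xB ω ≤ t})).toReal
        = s^(p+n) + t^(q+n) := by
      rw [← ENNReal.toReal_add (measure_ne_top _ _) (measure_ne_top _ _), hsum,
        hU, hV, ENNReal.toReal_add ENNReal.ofReal_ne_top ENNReal.ofReal_ne_top,
        ENNReal.toReal_ofReal (pow_nonneg hs.1.le _), ENNReal.toReal_ofReal (pow_nonneg ht.1.le _)]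
    have t2 : (ℙ (({ω | xA ω ≤ s} ∪ {ω | xB ω ≤ t})ᶜ)).toReal
        = 1 - (ℙ ({ω | xA ω ≤ s} ∪ {ω | xB ω ≤ t})).toReal := by
      rw [hcomplP, ENNReal.toReal_sub_of_le prob_le_one ENNReal.one_ne_top,
        ENNReal.toReal_one]
    have t3 : (ℙ ({ω | xA ω ≤ s} ∩ {ω | xB ω ≤ t})).toReal
        = s^p * (t^q * min s t ^ n) := by
      rw [hI, ENNReal.toReal_ofReal]
      have hm : 0 < min s t := lt_min hs.1 ht.1
      exact le_of_lt (mul_pos (pow_pos hs.1 p)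
        (mul_pos (pow_pos ht.1 q) (pow_pos hm n)))
    rw [t2]
    rw [t3] at t1
    linarith
  have hPhi : ∀ s t : ℝ, s ∈ Ioo (0:ℝ) 1 → t ∈ Ioo (0:ℝ) 1 →
      ℙ {ω | s < xA ω ∧ t < xB ω}
        = ENNReal.ofReal (1 - s^(p+n) - t^(q+n) + s^p * (t^q * min s t ^ n)) := by
    intro s t hs ht
    rw [← ENNReal.ofReal_toReal (measure_ne_top ℙ {ω | s < xA ω ∧ t < xB ω}),
      hPhiR s t hs ht]
  -- integrability
  have hintA : Integrable xA ℙ := by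
    apply Integrable.mono' (integrable_const (1:ℝ))
      hmA.aestronglyMeasurable
    filter_upwards [haeA] with ω hω
    rw [Real.norm_eq_abs, abs_of_pos hω.1]
    exact hω.2.le
  have hintB : Integrable xB ℙ := by
    apply Integrable.mono' (integrable_const (1:ℝ))
      hmB.aestronglyMeasurable
    filter_upwards [haeB] with ω hω
    rw [Real.norm_eq_abs, abs_of_pos hω.1]
    exact hω.2.le
  have hintAB : Integrable (fun ω => xA ω * xB ω) ℙ := by
    apply Integrable.mono' (integrable_const (1:ℝ))
      (hmA.mul hmB).aestronglyMeasurable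
    filter_upwards [haeA, haeB] with ω h1 h2
    rw [Real.norm_eq_abs, Pi.mul_apply, abs_of_pos (mul_pos h1.1 h2.1)]
    exact mul_le_one₀ h1.2.le h2.1.le h2.2.le
  -- E[xA]
  have hEA : ∫ ω, xA ω ∂ℙ = 1 - 1/((p:ℝ)+n+1) := by
    have hnn : 0 ≤ᵐ[(ℙ : Measure Ω)] xA := by
      filter_upwards [haeA] with ω hω; exact hω.1.le
    have hbdd : xA ≤ᵐ[(ℙ : Measure Ω)] fun _ => (1:ℝ) := by
      filter_upwards [haeA] with ω hω; exact hω.2.le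
    rw [hintA.integral_eq_integral_Ioc_meas_le hnn hbdd]
    have step1 : ∫ t in Ioc (0:ℝ) 1, (ℙ {a | t ≤ xA a}).toReal
        = ∫ t in Ioc (0:ℝ) 1, (ℙ {a | t < xA a}).toReal := by
      apply integral_congr_ae
      filter_upwards [ae_restrict_of_ae
        (meas_le_ae_eq_meas_lt (μ := (ℙ : Measure Ω)) volume xA)] with t ht
      rw [ht]
    simp only [measureReal_def]
    rw [step1]
    have step2 : ∀ t ∈ Ioc (0:ℝ) 1, (ℙ {a | t < xA a}).toReal = 1 - t^(p+n) := by
      intro t ht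
      have hc : {a | t < xA a} = {a | xA a ≤ t}ᶜ := by ext a; simp [not_le]
      have hms : MeasurableSet {a | xA a ≤ t} := hmA measurableSet_Iic
      rw [hc, prob_compl_eq_one_sub hms, hcdfA t ht.1 ht.2,
        ENNReal.toReal_sub_of_le (ENNReal.ofReal_le_one.mpr
          (pow_le_one₀ ht.1.le ht.2)) ENNReal.one_ne_top,
        ENNReal.toReal_one, ENNReal.toReal_ofReal (pow_nonneg ht.1.le _)]
    rw [setIntegral_congr_fun measurableSet_Ioc step2,
      ← intervalIntegral.integral_of_le (by norm_num : (0:ℝ) ≤ 1),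
      intervalIntegral.integral_sub intervalIntegrable_const
        ((continuous_pow _).intervalIntegrable 0 1),
      intervalIntegral.integral_const, cmm_int01]
    push_cast
    norm_num
  have hEB : ∫ ω, xB ω ∂ℙ = 1 - 1/((q:ℝ)+n+1) := by
    have hnn : 0 ≤ᵐ[(ℙ : Measure Ω)] xB := by
      filter_upwards [haeB] with ω hω; exact hω.1.le
    have hbdd : xB ≤ᵐ[(ℙ : Measure Ω)] fun _ => (1:ℝ) := by
      filter_upwards [haeB] with ω hω; exact hω.2.le
    rw [hintB.integral_eq_integral_Ioc_meas_le hnn hbdd]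
    have step1 : ∫ t in Ioc (0:ℝ) 1, (ℙ {a | t ≤ xB a}).toReal
        = ∫ t in Ioc (0:ℝ) 1, (ℙ {a | t < xB a}).toReal := by
      apply integral_congr_ae
      filter_upwards [ae_restrict_of_ae
        (meas_le_ae_eq_meas_lt (μ := (ℙ : Measure Ω)) volume xB)] with t ht
      rw [ht]
    simp only [measureReal_def]
    rw [step1]
    have step2 : ∀ t ∈ Ioc (0:ℝ) 1, (ℙ {a | t < xB a}).toReal = 1 - t^(q+n) := by
      intro t ht
      have hc : {a | t < xB a} = {a | xB a ≤ t}ᶜ := by ext a; simp [not_le]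
      have hms : MeasurableSet {a | xB a ≤ t} := hmB measurableSet_Iic
      rw [hc, prob_compl_eq_one_sub hms, hcdfB t ht.1 ht.2,
        ENNReal.toReal_sub_of_le (ENNReal.ofReal_le_one.mpr
          (pow_le_one₀ ht.1.le ht.2)) ENNReal.one_ne_top,
        ENNReal.toReal_one, ENNReal.toReal_ofReal (pow_nonneg ht.1.le _)]
    rw [setIntegral_congr_fun measurableSet_Ioc step2,
      ← intervalIntegral.integral_of_le (by norm_num : (0:ℝ) ≤ 1),
      intervalIntegral.integral_sub intervalIntegrable_const
        ((continuous_pow _).intervalIntegrable 0 1),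
      intervalIntegral.integral_const, cmm_int01]
    push_cast
    norm_num
  -- E[xA xB]
  have hEAB : ∫ ω, xA ω * xB ω ∂ℙ
      = 1 - 1/((p:ℝ)+n+1) - 1/((q:ℝ)+n+1) + 1/(((q:ℝ)+n+1)*((p:ℝ)+q+n+2))
        + 1/(((q:ℝ)+1)*((p:ℝ)+n+1)) - 1/(((q:ℝ)+1)*((p:ℝ)+q+n+2)) := by
    have hnnAB : 0 ≤ᵐ[(ℙ : Measure Ω)] fun ω => xA ω * xB ω := by
      filter_upwards [haeA, haeB] with ω h1 h2
      exact (mul_pos h1.1 h2.1).le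
    rw [integral_eq_lintegral_of_nonneg_ae hnnAB (hmA.mul hmB).aestronglyMeasurable]
    set ν : Measure ℝ := volume.restrict (Ioo (0:ℝ) 1) with hνdef
    set η : Measure (ℝ × ℝ) := ν.prod ν with hηdef
    set E : Set (Ω × (ℝ × ℝ)) := {z | z.2.1 < xA z.1} ∩ {z | z.2.2 < xB z.1}
      with hEdef
    have hEm : MeasurableSet E :=
      (measurableSet_lt measurable_snd.fst (hmA.comp measurable_fst)).inter
        (measurableSet_lt measurable_snd.snd (hmB.comp measurable_fst))
    -- the nonneg real integrand
    have hΦcont : Continuous fun pz : ℝ × ℝ =>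
        1 - pz.1^(p+n) - pz.2^(q+n) + pz.1^p * (pz.2^q * (min pz.1 pz.2)^n) := by
      exact ((continuous_const.sub (continuous_fst.pow _)).sub
        (continuous_snd.pow _)).add ((continuous_fst.pow p).mul
        ((continuous_snd.pow q).mul ((continuous_fst.min continuous_snd).pow n)))
    have hswap : ∫⁻ ω, ∫⁻ pz, E.indicator 1 (ω, pz) ∂η ∂ℙ
        = ∫⁻ pz, ∫⁻ ω, E.indicator 1 (ω, pz) ∂ℙ ∂η := by
      apply lintegral_lintegral_swap
      exact (measurable_one.indicator hEm).aemeasurable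
    have claim1 : ∀ᵐ ω ∂(ℙ : Measure Ω),
        ∫⁻ pz, E.indicator 1 (ω, pz) ∂η = ENNReal.ofReal (xA ω * xB ω) := by
      filter_upwards [haeA, haeB] with ω h1 h2
      have hfun : (fun pz : ℝ × ℝ => E.indicator 1 (ω, pz))
          = (Iio (xA ω) ×ˢ Iio (xB ω)).indicator (1 : ℝ × ℝ → ℝ≥0∞) := by
        funext pz
        by_cases hmem : pz ∈ Iio (xA ω) ×ˢ Iio (xB ω)
        · rw [Set.indicator_of_mem hmem]
          have hin : (ω, pz) ∈ E := ⟨hmem.1, hmem.2⟩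
          rw [Set.indicator_of_mem hin]; rfl
        · rw [Set.indicator_of_notMem hmem]
          have hout : (ω, pz) ∉ E := fun hc => hmem ⟨hc.1, hc.2⟩
          rw [Set.indicator_of_notMem hout]
      rw [hfun, lintegral_indicator_one (measurableSet_Iio.prod measurableSet_Iio),
        hηdef, Measure.prod_prod]
      have hx : ν (Iio (xA ω)) = ENNReal.ofReal (xA ω) := by
        rw [hνdef, Measure.restrict_apply measurableSet_Iio]
        have he : Iio (xA ω) ∩ Ioo 0 1 = Ioo 0 (xA ω) := by
          ext z; simp only [mem_inter_iff, mem_Iio, mem_Ioo]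
          exact ⟨fun hz => ⟨hz.2.1, hz.1⟩,
            fun hz => ⟨hz.2, hz.1, hz.2.trans h1.2⟩⟩
        rw [he, Real.volume_Ioo, sub_zero]
      have hy : ν (Iio (xB ω)) = ENNReal.ofReal (xB ω) := by
        rw [hνdef, Measure.restrict_apply measurableSet_Iio]
        have he : Iio (xB ω) ∩ Ioo 0 1 = Ioo 0 (xB ω) := by
          ext z; simp only [mem_inter_iff, mem_Iio, mem_Ioo]
          exact ⟨fun hz => ⟨hz.2.1, hz.1⟩,
            fun hz => ⟨hz.2, hz.1, hz.2.trans h2.2⟩⟩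
        rw [he, Real.volume_Ioo, sub_zero]
      rw [hx, hy, ← ENNReal.ofReal_mul h1.1.le]
    have claim2 : ∀ pz : ℝ × ℝ, ∫⁻ ω, E.indicator 1 (ω, pz) ∂ℙ
        = ℙ {ω | pz.1 < xA ω ∧ pz.2 < xB ω} := by
      intro pz
      have hfun : (fun ω => E.indicator 1 (ω, pz))
          = ({ω | pz.1 < xA ω ∧ pz.2 < xB ω}).indicator (1 : Ω → ℝ≥0∞) := by
        funext ω
        by_cases hmem : ω ∈ {ω | pz.1 < xA ω ∧ pz.2 < xB ω}
        · rw [Set.indicator_of_mem hmem]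
          have hin : (ω, pz) ∈ E := ⟨hmem.1, hmem.2⟩
          rw [Set.indicator_of_mem hin]; rfl
        · rw [Set.indicator_of_notMem hmem]
          have hout : (ω, pz) ∉ E := fun hc => hmem ⟨hc.1, hc.2⟩
          rw [Set.indicator_of_notMem hout]
      rw [hfun, lintegral_indicator_one]
      exact (measurableSet_lt measurable_const hmA).inter
        (measurableSet_lt measurable_const hmB)
    have haeη1 : ∀ᵐ pz ∂η, pz.1 ∈ Ioo (0:ℝ) 1 := by
      rw [ae_iff]
      have he : {pz : ℝ × ℝ | ¬ pz.1 ∈ Ioo (0:ℝ) 1} = (Ioo (0:ℝ) 1)ᶜ ×ˢ univ := by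
        ext pz; simp [Set.mem_prod]
      rw [he, hηdef, Measure.prod_prod, hνdef,
        Measure.restrict_apply measurableSet_Ioo.compl]
      simp
    have haeη2 : ∀ᵐ pz ∂η, pz.2 ∈ Ioo (0:ℝ) 1 := by
      rw [ae_iff]
      have he : {pz : ℝ × ℝ | ¬ pz.2 ∈ Ioo (0:ℝ) 1} = univ ×ˢ (Ioo (0:ℝ) 1)ᶜ := by
        ext pz; simp [Set.mem_prod]
      rw [he, hηdef, Measure.prod_prod, hνdef,
        Measure.restrict_apply measurableSet_Ioo.compl]
      simp
    -- pointwise nonnegativity of the integrand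
    have hΦnn : ∀ s t : ℝ, s ∈ Ioo (0:ℝ) 1 → t ∈ Ioo (0:ℝ) 1 →
        0 ≤ 1 - s^(p+n) - t^(q+n) + s^p * (t^q * min s t ^ n) := by
      intro s t hs ht
      rw [← hPhiR s t hs ht]
      exact ENNReal.toReal_nonneg
    have hΦint : ∀ s : ℝ, Integrable
        (fun t => 1 - s^(p+n) - t^(q+n) + s^p * (t^q * min s t ^ n)) ν := by
      intro s
      have hc : Continuous fun t : ℝ =>
          1 - s^(p+n) - t^(q+n) + s^p * (t^q * min s t ^ n) :=
        (continuous_const.sub (continuous_pow _)).add (continuous_const.mul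
          ((continuous_pow q).mul ((continuous_const.min continuous_id).pow n)))
      rw [hνdef]
      exact (hc.integrableOn_Icc (a := 0) (b := 1)).mono_set Ioo_subset_Icc_self
    have key : ∫⁻ ω, ENNReal.ofReal (xA ω * xB ω) ∂ℙ
        = ENNReal.ofReal (∫ s in Ioo (0:ℝ) 1,
            ((1 - 1/((q:ℝ)+n+1)) * s^0 + (-1 + 1/((q:ℝ)+1)) * s^(p+n)
              + (1/((q:ℝ)+n+1) - 1/((q:ℝ)+1)) * s^(p+q+n+1))) := by
      calc ∫⁻ ω, ENNReal.ofReal (xA ω * xB ω) ∂ℙ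
          = ∫⁻ ω, ∫⁻ pz, E.indicator 1 (ω, pz) ∂η ∂ℙ :=
            (lintegral_congr_ae claim1).symm
        _ = ∫⁻ pz, ∫⁻ ω, E.indicator 1 (ω, pz) ∂ℙ ∂η := hswap
        _ = ∫⁻ pz, ENNReal.ofReal
              (1 - pz.1^(p+n) - pz.2^(q+n)
                + pz.1^p * (pz.2^q * (min pz.1 pz.2)^n)) ∂η := by
            apply lintegral_congr_ae
            filter_upwards [haeη1, haeη2] with pz h1 h2
            rw [claim2 pz, hPhi pz.1 pz.2 h1 h2]
        _ = ∫⁻ s, (∫⁻ t, ENNReal.ofReal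
              (1 - s^(p+n) - t^(q+n) + s^p * (t^q * (min s t)^n)) ∂ν) ∂ν := by
            rw [hηdef]
            exact lintegral_prod _ (ENNReal.measurable_ofReal.comp
              hΦcont.measurable).aemeasurable
        _ = ∫⁻ s, ENNReal.ofReal
              ((1 - 1/((q:ℝ)+n+1)) * s^0 + (-1 + 1/((q:ℝ)+1)) * s^(p+n)
                + (1/((q:ℝ)+n+1) - 1/((q:ℝ)+1)) * s^(p+q+n+1)) ∂ν := by
            apply lintegral_congr_ae
            rw [hνdef]
            filter_upwards [ae_restrict_mem measurableSet_Ioo] with s hs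
            rw [← cmm_phi_inner p q n hs, ← hνdef,
              ← ofReal_integral_eq_lintegral_ofReal (hΦint s) ?_]
            rw [hνdef]
            filter_upwards [ae_restrict_mem measurableSet_Ioo] with t ht
            exact hΦnn s t hs ht
        _ = ENNReal.ofReal (∫ s in Ioo (0:ℝ) 1,
              ((1 - 1/((q:ℝ)+n+1)) * s^0 + (-1 + 1/((q:ℝ)+1)) * s^(p+n)
                + (1/((q:ℝ)+n+1) - 1/((q:ℝ)+1)) * s^(p+q+n+1))) := by
            rw [hνdef]
            refine (ofReal_integral_eq_lintegral_ofReal ?_ ?_).symm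
            · have hc : Continuous fun s : ℝ =>
                  (1 - 1/((q:ℝ)+n+1)) * s^0 + (-1 + 1/((q:ℝ)+1)) * s^(p+n)
                    + (1/((q:ℝ)+n+1) - 1/((q:ℝ)+1)) * s^(p+q+n+1) := by
                exact ((continuous_const.mul (continuous_pow 0)).add
                  (continuous_const.mul (continuous_pow _))).add
                  (continuous_const.mul (continuous_pow _))
              exact (hc.integrableOn_Icc (a := 0) (b := 1)).mono_set
                Ioo_subset_Icc_self
            · filter_upwards [ae_restrict_mem measurableSet_Ioo] with s hs
              rw [← cmm_phi_inner p q n hs]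
              apply setIntegral_nonneg measurableSet_Ioo
              intro t ht
              exact hΦnn s t hs ht
    rw [key, ENNReal.toReal_ofReal, cmm_phi_outer p q n]
    apply setIntegral_nonneg measurableSet_Ioo
    intro s hs
    rw [← cmm_phi_inner p q n hs]
    apply setIntegral_nonneg measurableSet_Ioo
    intro t ht
    exact hΦnn s t hs ht
  -- final algebra
  rw [hEA, hEB, hEAB, hA_card, hB_card, hU_card]
  have hq1 : (0:ℝ) < (q:ℝ)+1 := by positivity
  have hqn1 : (0:ℝ) < (q:ℝ)+n+1 := by positivity
  have hpn1 : (0:ℝ) < (p:ℝ)+n+1 := by positivity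
  have hu2 : (0:ℝ) < (p:ℝ)+q+n+2 := by positivity
  push_cast
  field_simp
  ring
end

section
/- Let a, b, n, u, α, β be positive reals with u = n + α + β, a = n + α, b = n + β, and let Z = αn(a² + αβ) + βn(b² + αβ) + (a² + αβ)(b² + αβ). Then the [3,3] entry of the inverse of the 3×3 matrix F = m·[[β/(u a²) + 1/(uα), 0, −1/(uα)], [0, α/(u b²) + 1/(uβ), −1/(uβ)], [−1/(uα), −1/(uβ), 1/(un) + 1/(uβ) + 1/(uα)]] equals (nu/m) · (b² + αβ)(a² + αβ)/Z. -/
open Matrix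

set_option maxHeartbeats 2000000 in
/-- The [3,3] entry of the inverse Fisher information matrix of the set
intersection estimation problem. -/
theorem fisher_inverse_entry
    (m a b n u α β Z : ℝ)
    (hm : 0 < m) (hα : 0 < α) (hβ : 0 < β) (hn : 0 < n)
    (hu : u = n + α + β) (ha : a = n + α) (hb : b = n + β)
    (hZ : Z = α * n * (a ^ 2 + α * β) + β * n * (b ^ 2 + α * β)
        + (a ^ 2 + α * β) * (b ^ 2 + α * β))
    (F : Matrix (Fin 3) (Fin 3) ℝ)
    (hF : F = m • !![β / (u * a ^ 2) + 1 / (u * α), 0, -1 / (u * α);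
                    0, α / (u * b ^ 2) + 1 / (u * β), -1 / (u * β);
                    -1 / (u * α), -1 / (u * β),
                      1 / (u * n) + 1 / (u * β) + 1 / (u * α)]) :
    F⁻¹ 2 2 = (n * u / m) * ((b ^ 2 + α * β) * (a ^ 2 + α * β)) / Z := by
  have hu0 : 0 < u := by rw [hu]; positivity
  have ha0 : 0 < a := by rw [ha]; positivity
  have hb0 : 0 < b := by rw [hb]; positivity
  have hZ0 : 0 < Z := by rw [hZ]; positivity
  have hdet : F.det = m ^ 3 * Z / (u ^ 3 * n * a ^ 2 * b ^ 2 * α * β) := by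
    subst hF
    rw [Matrix.det_fin_three]
    simp only [Matrix.smul_apply, Matrix.cons_val', Matrix.cons_val_zero,
      Matrix.cons_val_one, Matrix.head_cons, Matrix.empty_val',
      Matrix.cons_val_fin_one, Matrix.head_fin_const, Matrix.cons_val_two,
      Matrix.tail_cons, Matrix.head_fin_const, smul_eq_mul, Matrix.of_apply]
    subst hZ ha hb hu
    field_simp
    ring
  have hdetne : F.det ≠ 0 := by
    rw [hdet]; positivity
  rw [Matrix.inv_def, Matrix.smul_apply, Matrix.adjugate_fin_three,
    Ring.inverse_eq_inv']
  simp only [Matrix.cons_val', Matrix.cons_val_zero, Matrix.cons_val_one,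
    Matrix.head_cons, Matrix.empty_val', Matrix.cons_val_fin_one,
    Matrix.cons_val_two, Matrix.tail_cons, smul_eq_mul, Matrix.of_apply,
    Matrix.head_fin_const]
  rw [hdet]
  have hF00 : F 0 0 = m * (β / (u * a ^ 2) + 1 / (u * α)) := by
    rw [hF]; simp
  have hF01 : F 0 1 = m * 0 := by rw [hF]; simp
  have hF10 : F 1 0 = m * 0 := by rw [hF]; simp
  have hF11 : F 1 1 = m * (α / (u * b ^ 2) + 1 / (u * β)) := by
    rw [hF]; simp
  rw [hF00, hF01, hF10, hF11]
  subst hZ ha hb hu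
  field_simp
  ring
end
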